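/- Let {ℙ_n}_{n≥0} be the monic OPS of a quasi-definite moment functional u on Π^d, satisfying the three term relations x_i ℙ_n = L_{n,i} ℙ_{n+1} + B_{n,i} ℙ_n + C_{n,i} ℙ_{n−1}. Let {M_n}_{n≥1} and {N_n}_{n≥2} be matrices of sizes r_n^d × r_{n−1}^d and r_n^d × r_{n−2}^d with N_2 ≠ 0, and define recursively ℚ_0 = ℙ_0, ℚ_1 = ℙ_1 − M_1 ℙ_0, and ℚ_n = ℙ_n − M_n ℚ_{n−1} − N_n ℚ_{n−2} for n ≥ 2. Then {ℚ_n} satisfies three term relations x_i ℚ_n = L_{n,i} ℚ_{n+1} + B̂_{n,i} ℚ_n + Ĉ_{n,i} ℚ_{n−1} (1 ≤ i ≤ d, with ℚ_{−1} = 0, Ĉ_{−1,i} = 0) if and only if for all n and 1 ≤ i ≤ d: B̂_{n,i} = B_{n,i} − M_n L_{n−1,i} + L_{n,i} M_{n+1}; Ĉ_{n,i} = C_{n,i} − M_n B̂_{n−1,i} + B_{n,i} M_n − N_n L_{n−2,i} + L_{n,i} N_{n+1}; M_n Ĉ_{n−1,i} + N_n B̂_{n−2,i} = C_{n,i} M_{n−1}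 + B_{n,i} N_n; and C_{n,i} N_{n−1} = N_n Ĉ_{n−2,i}. In that case {ℚ_n} is the monic OPS of a quasi-definite moment functional v, and v = λ(x)u where λ(x) = N_2^t H_2^{−1} ℙ_2 + M_1^t H_1^{−1} ℙ_1 + H_0^{−1} ℙ_0 is a polynomial of exact total degree 2. -/

import Mathlib

open MvPolynomial Matrix

/-- The index set for monomials of total degree `n` in `d` variables:
multi-indices (exponent tuples) summing to `n`. Its cardinality is `r_n^d = C(n+d-1,n)`. -/
abbrev Idx (d n : ℕ) : Type := {ν : Fin d → ℕ // ν ∈ Finset.Nat.antidiagonalTuple d n}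

/-- The monomial `x^ν` associated with a multi-index `ν` of total degree `n`;
the family `fun α : Idx d n => monIdx α` is the canonical vector `𝕏_n`. -/
noncomputable def monIdx {d n : ℕ} (α : Idx d n) : MvPolynomial (Fin d) ℝ :=
  MvPolynomial.monomial (Finsupp.equivFunOnFinite.symm α.1) 1

/-- A polynomial system (PS): a sequence of vectors `ℙ_n` of size `r_n^d` whose
entries are polynomials of total degree `n`, the entries of `ℙ_0,…,ℙ_n` forming a
basis of the polynomials of total degree at most `n`. -/
structure PolySystem (d : ℕ) where
  vec : (n : ℕ) → Idx d n → MvPolynomial (Fin d) ℝ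
  degree_eq : ∀ n α, (vec n α).totalDegree = n
  indep : LinearIndependent ℝ (fun p : (Σ n : ℕ, Idx d n) => vec p.1 p.2)
  spans : ∀ (n : ℕ) (p : MvPolynomial (Fin d) ℝ), p.totalDegree ≤ n →
    p ∈ Submodule.span ℝ {q | ∃ m ≤ n, ∃ α : Idx d m, q = vec m α}

/-- `{ℙ_n}` is an orthogonal polynomial system (OPS) with respect to the moment
functional `u` : `⟨u, 𝕏_m ℙ_n^t⟩ = 0` for `m < n` and `⟨u, 𝕏_n ℙ_n^t⟩` nonsingular. -/
def IsOPS {d : ℕ} (u : MvPolynomial (Fin d) ℝ →ₗ[ℝ] ℝ) (P : PolySystem d) : Prop :=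
  (∀ m n : ℕ, m < n → ∀ (α : Idx d m) (β : Idx d n), u (monIdx α * P.vec n β) = 0) ∧
  (∀ n : ℕ, IsUnit (Matrix.of fun α β : Idx d n => u (monIdx α * P.vec n β)).det)

/-- `u` is quasi-definite iff it admits an OPS. -/
def QuasiDefinite {d : ℕ} (u : MvPolynomial (Fin d) ℝ →ₗ[ℝ] ℝ) : Prop :=
  ∃ P : PolySystem d, IsOPS u P

/-- `H_n = ⟨u, ℙ_n ℙ_n^t⟩`. -/
noncomputable def Hmat {d : ℕ} (u : MvPolynomial (Fin d) ℝ →ₗ[ℝ] ℝ) (P : PolySystem d)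
    (n : ℕ) : Matrix (Idx d n) (Idx d n) ℝ :=
  Matrix.of fun α β => u (P.vec n α * P.vec n β)

/-- `P_m(u;x,y) = ℙ_m(x)^t H_m⁻¹ ℙ_m(y)`. -/
noncomputable def kerP {d : ℕ} (u : MvPolynomial (Fin d) ℝ →ₗ[ℝ] ℝ) (P : PolySystem d)
    (m : ℕ) (x y : Fin d → ℝ) : ℝ :=
  ∑ α, ∑ β, eval x (P.vec m α) * (Hmat u P m)⁻¹ α β * eval y (P.vec m β)

/-- `kerLT u P n = K_{n-1}(u;·,·) = Σ_{m<n} P_m(u;·,·)`, so that `kerLT u P 0 = K_{-1} = 0`. -/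
noncomputable def kerLT {d : ℕ} (u : MvPolynomial (Fin d) ℝ →ₗ[ℝ] ℝ) (P : PolySystem d)
    (n : ℕ) (x y : Fin d → ℝ) : ℝ :=
  ∑ m ∈ Finset.range n, kerP u P m x y

/-- `𝖯_n(ξ) = (ℙ_n(ξ_1)|⋯|ℙ_n(ξ_N))`. -/
noncomputable def Pmat {d N : ℕ} (P : PolySystem d) (ξ : Fin N → (Fin d → ℝ)) (n : ℕ) :
    Matrix (Idx d n) (Fin N) ℝ :=
  Matrix.of fun α i => eval (ξ i) (P.vec n α)

/-- `Kmat u P ξ n = 𝒦_{n-1} = (K_{n-1}(u;ξ_i,ξ_j))_{i,j}`, with `𝒦_{-1} = 0`. -/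
noncomputable def Kmat {d N : ℕ} (u : MvPolynomial (Fin d) ℝ →ₗ[ℝ] ℝ) (P : PolySystem d)
    (ξ : Fin N → (Fin d → ℝ)) (n : ℕ) : Matrix (Fin N) (Fin N) ℝ :=
  Matrix.of fun i j => kerLT u P n (ξ i) (ξ j)

/-- `Kvec u P ξ n x = 𝖪_{n-1}(ξ,x) = (K_{n-1}(u;ξ_1,x),…,K_{n-1}(u;ξ_N,x))^t`, with `𝖪_{-1}=0`. -/
noncomputable def Kvec {d N : ℕ} (u : MvPolynomial (Fin d) ℝ →ₗ[ℝ] ℝ) (P : PolySystem d)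
    (ξ : Fin N → (Fin d → ℝ)) (n : ℕ) (x : Fin d → ℝ) : Fin N → ℝ :=
  fun i => kerLT u P n (ξ i) x

/-- A PS is monic if the degree-`n` homogeneous part of the entry of `ℙ_n` indexed
by `α` is exactly the monomial `x^α`. -/
def PolySystem.IsMonic {d : ℕ} (P : PolySystem d) : Prop :=
  ∀ (n : ℕ) (α : Idx d n) (ν : Fin d →₀ ℕ), (ν.sum fun _ e => e) = n →
    MvPolynomial.coeff ν (P.vec n α) = if ν = Finsupp.equivFunOnFinite.symm α.1 then 1 else 0

/-- Multiplication of a real matrix times a vector of polynomials. -/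
noncomputable def matVec {d : ℕ} {a b : Type} [Fintype b] (M : Matrix a b ℝ)
    (w : b → MvPolynomial (Fin d) ℝ) (i : a) : MvPolynomial (Fin d) ℝ :=
  ∑ j, M i j • w j

/-- The matrix `L_{n,i}` determined by `x_i 𝕏_n = L_{n,i} 𝕏_{n+1}`. -/
noncomputable def Lmat (d n : ℕ) (i : Fin d) : Matrix (Idx d n) (Idx d (n + 1)) ℝ :=
  Matrix.of fun α β => if β.1 = (fun j => α.1 j + if j = i then 1 else 0) then 1 else 0

/-- The unique multi-index of degree 0. -/
def zeroIdx {d : ℕ} : Idx d 0 :=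
  ⟨fun _ => 0, by simp [Finset.Nat.mem_antidiagonalTuple]⟩

/-- The degree-2 multi-index `e_i + e_j`. -/
def e2 {d : ℕ} (i j : Fin d) : Idx d 2 :=
  ⟨fun k => (if k = i then 1 else 0) + (if k = j then 1 else 0), by
    simp [Finset.Nat.mem_antidiagonalTuple, Finset.sum_add_distrib]⟩

/-- `A_{h,2} = Σ_{1≤i≤j≤d} a^{(2)}_{ij} L_{h,j} L_{h+1,i}`. -/
noncomputable def Amat2 {d : ℕ} (a2 : Idx d 2 → ℝ) (h : ℕ) :
    Matrix (Idx d h) (Idx d (h + 2)) ℝ :=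
  ∑ i : Fin d, ∑ j : Fin d,
    if i ≤ j then a2 (e2 i j) • (Lmat d h j * Lmat d (h + 1) i) else 0

/-- The polynomial `λ(x) = a_2·𝕏_2 + a_1·𝕏_1 + a_0`. -/
noncomputable def lamPoly {d : ℕ} (a2 : Idx d 2 → ℝ) (a1 : Idx d 1 → ℝ) (a0 : ℝ) :
    MvPolynomial (Fin d) ℝ :=
  (∑ α : Idx d 2, a2 α • monIdx α) + (∑ α : Idx d 1, a1 α • monIdx α) + MvPolynomial.C a0

set_option linter.unusedSectionVars false

section Infra

variable {d : ℕ}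

/-- degree of a finsupp -/
local notation "∥" ν "∥" => (Finsupp.sum ν fun _ e => e)

lemma idx_sum {n : ℕ} (α : Idx d n) :
    ((Finsupp.equivFunOnFinite.symm α.1).sum fun _ e => e) = n := by
  have h := α.2
  rw [Finset.Nat.mem_antidiagonalTuple] at h
  rw [Finsupp.sum_fintype _ _ (fun _ => rfl)]
  exact h

lemma idx_eq_of_symm_eq {n : ℕ} {α β : Idx d n}
    (h : (Finsupp.equivFunOnFinite.symm α.1 : Fin d →₀ ℕ) = Finsupp.equivFunOnFinite.symm β.1) :
    α = β := by
  apply Subtype.ext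
  exact Finsupp.equivFunOnFinite.symm.injective h

lemma idx0_eq (β : Idx d 0) : β = zeroIdx := by
  apply Subtype.ext
  funext j
  have h := β.2
  rw [Finset.Nat.mem_antidiagonalTuple] at h
  have := Finset.sum_eq_zero_iff.mp h j (Finset.mem_univ j)
  simpa [zeroIdx] using this

instance : Unique (Idx d 0) := ⟨⟨zeroIdx⟩, idx0_eq⟩

lemma coeff_monIdx {n : ℕ} (α : Idx d n) (ν : Fin d →₀ ℕ) :
    MvPolynomial.coeff ν (monIdx α) = if ν = Finsupp.equivFunOnFinite.symm α.1 then 1 else 0 := by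
  simp [monIdx, MvPolynomial.coeff_monomial, eq_comm]

lemma totalDegree_monIdx {n : ℕ} (α : Idx d n) : (monIdx α).totalDegree = n := by
  rw [monIdx, MvPolynomial.totalDegree_monomial _ (one_ne_zero), idx_sum]

/-- if totalDegree ≤ n and all coefficients at level n vanish then p = 0 or deg < n -/
lemma tdeg_lt_of_top_zero (p : MvPolynomial (Fin d) ℝ) (n : ℕ)
    (h1 : p.totalDegree ≤ n)
    (h2 : ∀ ν : Fin d →₀ ℕ, (ν.sum fun _ e => e) = n → MvPolynomial.coeff ν p = 0) :
    p = 0 ∨ p.totalDegree < n := by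
  by_cases hp : p = 0
  · exact Or.inl hp
  · right
    rcases lt_or_eq_of_le h1 with h | h
    · exact h
    · exfalso
      obtain ⟨ν, hν, hsup⟩ := Finset.exists_mem_eq_sup p.support
        (MvPolynomial.support_nonempty.mpr hp) fun ν => ν.sum fun _ e => e
      have hνn : (ν.sum fun _ e => e) = n := by
        have : p.totalDegree = ν.sum fun _ e => e := hsup
        rw [← this, h]
      have : MvPolynomial.coeff ν p = 0 := h2 ν hνn
      exact (MvPolynomial.mem_support_iff.mp hν) this

lemma coeff_zero_of_deg_lt {p : MvPolynomial (Fin d) ℝ} {n : ℕ} {ν : Fin d →₀ ℕ}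
    (h : p = 0 ∨ p.totalDegree < n) (hν : (ν.sum fun _ e => e) = n) :
    MvPolynomial.coeff ν p = 0 := by
  rcases h with h | h
  · simp [h]
  · apply MvPolynomial.coeff_eq_zero_of_totalDegree_lt
    rw [show ∑ i ∈ ν.support, ν i = ν.sum fun _ e => e from rfl, hν]
    exact h

end Infra

section MatVecAPI

variable {d : ℕ} {a b c : Type} [Fintype b] [Fintype c]

/-- multiplication of each entry by `X i` -/
noncomputable def xmul {d : ℕ} {a : Type} (i : Fin d) (w : a → MvPolynomial (Fin d) ℝ) :
    a → MvPolynomial (Fin d) ℝ := fun j => X i * w j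

lemma matVec_add (M : Matrix a b ℝ) (w v : b → MvPolynomial (Fin d) ℝ) :
    matVec M (w + v) = matVec M w + matVec M v := by
  funext α
  simp [matVec, smul_add, Finset.sum_add_distrib]

lemma matVec_sub (M : Matrix a b ℝ) (w v : b → MvPolynomial (Fin d) ℝ) :
    matVec M (w - v) = matVec M w - matVec M v := by
  funext α
  simp [matVec, smul_sub, Finset.sum_sub_distrib]

lemma add_matVec (M N : Matrix a b ℝ) (w : b → MvPolynomial (Fin d) ℝ) :
    matVec (M + N) w = matVec M w + matVec N w := by
  funext α
  simp [matVec, add_smul, Finset.sum_add_distrib]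

lemma sub_matVec (M N : Matrix a b ℝ) (w : b → MvPolynomial (Fin d) ℝ) :
    matVec (M - N) w = matVec M w - matVec N w := by
  funext α
  simp [matVec, sub_smul, Finset.sum_sub_distrib]

lemma zero_matVec (w : b → MvPolynomial (Fin d) ℝ) :
    matVec (0 : Matrix a b ℝ) w = 0 := by
  funext α
  simp [matVec]

lemma matVec_matVec (M : Matrix a b ℝ) (N : Matrix b c ℝ) (w : c → MvPolynomial (Fin d) ℝ) :
    matVec M (matVec N w) = matVec (M * N) w := by
  funext α
  simp only [matVec, Finset.smul_sum, smul_smul, Matrix.mul_apply, Finset.sum_smul]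
  rw [Finset.sum_comm]

lemma xmul_matVec (i : Fin d) (M : Matrix a b ℝ) (w : b → MvPolynomial (Fin d) ℝ) :
    xmul i (matVec M w) = matVec M (xmul i w) := by
  funext α
  simp [xmul, matVec, Finset.mul_sum, mul_smul_comm]

lemma xmul_sub (i : Fin d) (w v : a → MvPolynomial (Fin d) ℝ) :
    xmul i (w - v) = xmul i w - xmul i v := by
  funext α
  simp [xmul, mul_sub]

lemma xmul_add (i : Fin d) (w v : a → MvPolynomial (Fin d) ℝ) :
    xmul i (w + v) = xmul i w + xmul i v := by
  funext α
  simp [xmul, mul_add]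

end MatVecAPI
section Pfacts

variable {d : ℕ} (u : MvPolynomial (Fin d) ℝ →ₗ[ℝ] ℝ) (P : PolySystem d)

lemma finsupp_deg_zero (ν : Fin d →₀ ℕ) (h : (ν.sum fun _ e => e) = 0) : ν = 0 := by
  ext a
  by_cases ha : a ∈ ν.support
  · have := Finset.sum_eq_zero_iff.mp h a ha
    simpa using this
  · simpa using Finsupp.notMem_support_iff.mp ha

/-- the Idx of a finsupp -/
noncomputable def idxOf {n : ℕ} (ν : Fin d →₀ ℕ) (h : (ν.sum fun _ e => e) = n) : Idx d n :=
  ⟨Finsupp.equivFunOnFinite ν, by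
    rw [Finset.Nat.mem_antidiagonalTuple, ← h, Finsupp.sum_fintype _ _ (fun _ => rfl)]
    rfl⟩

lemma monIdx_idxOf {n : ℕ} (ν : Fin d →₀ ℕ) (h : (ν.sum fun _ e => e) = n) :
    monIdx (idxOf ν h) = MvPolynomial.monomial ν 1 := by
  simp [monIdx, idxOf]

lemma symm_idxOf {n : ℕ} (ν : Fin d →₀ ℕ) (h : (ν.sum fun _ e => e) = n) :
    (Finsupp.equivFunOnFinite.symm (idxOf ν h).1 : Fin d →₀ ℕ) = ν := by
  simp [idxOf]

lemma uOrthPoly (hP : IsOPS u P) {n : ℕ} (β : Idx d n) (p : MvPolynomial (Fin d) ℝ)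
    (h : p = 0 ∨ p.totalDegree < n) : u (p * P.vec n β) = 0 := by
  rcases h with h | h
  · simp [h]
  · conv_lhs => rw [p.as_sum]
    rw [Finset.sum_mul, map_sum]
    apply Finset.sum_eq_zero
    intro ν hν
    have hsmul : (MvPolynomial.monomial ν) (MvPolynomial.coeff ν p)
        = MvPolynomial.coeff ν p • MvPolynomial.monomial ν 1 := by
      simp [MvPolynomial.smul_monomial]
    rw [hsmul, smul_mul_assoc, _root_.map_smul, smul_eq_mul]
    have hlt : (ν.sum fun _ e => e) < n := by
      calc (ν.sum fun _ e => e) ≤ p.totalDegree := MvPolynomial.le_totalDegree hν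
      _ < n := h
    rw [← monIdx_idxOf ν rfl]
    rw [hP.1 _ n hlt _ β, mul_zero]

lemma Porth (hP : IsOPS u P) {m k : ℕ} (h : m ≠ k) (β : Idx d m) (γ : Idx d k) :
    u (P.vec m β * P.vec k γ) = 0 := by
  rcases Nat.lt_or_ge m k with hlt | hge
  · exact uOrthPoly u P hP γ _ (Or.inr (by rw [P.degree_eq]; exact hlt))
  · have hlt : k < m := lt_of_le_of_ne hge (Ne.symm h)
    rw [mul_comm]
    exact uOrthPoly u P hP β _ (Or.inr (by rw [P.degree_eq]; exact hlt))

lemma P_sub_mon (hPmonic : P.IsMonic) (n : ℕ) (α : Idx d n) :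
    P.vec n α - monIdx α = 0 ∨ (P.vec n α - monIdx α).totalDegree < n := by
  apply tdeg_lt_of_top_zero
  · calc (P.vec n α - monIdx α).totalDegree
        = (P.vec n α + (- monIdx α)).totalDegree := by rw [sub_eq_add_neg]
      _ ≤ max (P.vec n α).totalDegree (- monIdx α).totalDegree := MvPolynomial.totalDegree_add _ _
      _ ≤ n := by
          rw [MvPolynomial.totalDegree_neg, totalDegree_monIdx, P.degree_eq]
          simp
  · intro ν hν
    rw [MvPolynomial.coeff_sub, hPmonic n α ν hν, coeff_monIdx]
    simp

lemma Hmat_eq (hP : IsOPS u P) (hPmonic : P.IsMonic) (n : ℕ) :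
    Hmat u P n = Matrix.of fun α β : Idx d n => u (monIdx α * P.vec n β) := by
  ext α β
  have h0 : u ((P.vec n α - monIdx α) * P.vec n β) = 0 :=
    uOrthPoly u P hP β _ (P_sub_mon P hPmonic n α)
  rw [sub_mul, map_sub, sub_eq_zero] at h0
  exact h0

lemma Hmat_unit (hP : IsOPS u P) (hPmonic : P.IsMonic) (n : ℕ) :
    IsUnit (Hmat u P n).det := by
  rw [Hmat_eq u P hP hPmonic]
  exact hP.2 n

lemma uNondeg (hP : IsOPS u P) (hPmonic : P.IsMonic) (r : MvPolynomial (Fin d) ℝ)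
    (h : ∀ (m : ℕ) (γ : Idx d m), u (P.vec m γ * r) = 0) : r = 0 := by
  by_contra hr
  set m := r.totalDegree with hm
  set a : Idx d m → ℝ := fun β => MvPolynomial.coeff (Finsupp.equivFunOnFinite.symm β.1) r with ha
  set r' := r - ∑ β : Idx d m, a β • P.vec m β with hr'
  have hr'deg : r' = 0 ∨ r'.totalDegree < m := by
    apply tdeg_lt_of_top_zero
    · calc r'.totalDegree ≤ max r.totalDegree (- ∑ β : Idx d m, a β • P.vec m β).totalDegree := by
            rw [hr', sub_eq_add_neg]; exact MvPolynomial.totalDegree_add _ _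
      _ ≤ m := by
          apply max_le le_rfl
          rw [MvPolynomial.totalDegree_neg]
          refine le_trans (MvPolynomial.totalDegree_finset_sum _ _) ?_
          apply Finset.sup_le
          intro β _
          refine le_trans (MvPolynomial.totalDegree_smul_le _ _) ?_
          rw [P.degree_eq]
    · intro ν hν
      rw [hr', MvPolynomial.coeff_sub]
      rw [MvPolynomial.coeff_sum]
      have hcoef : ∀ β : Idx d m, MvPolynomial.coeff ν (a β • P.vec m β)
          = a β * (if ν = Finsupp.equivFunOnFinite.symm β.1 then 1 else 0) := by
        intro β
        rw [MvPolynomial.coeff_smul, hPmonic m β ν hν, smul_eq_mul]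
      rw [Finset.sum_congr rfl (fun β _ => hcoef β)]
      have hdelta : ∀ β : Idx d m,
          (a β * if ν = Finsupp.equivFunOnFinite.symm β.1 then 1 else 0)
          = if β = idxOf ν hν then a β else 0 := by
        intro β
        by_cases hb : β = idxOf ν hν
        · subst hb
          rw [if_pos (symm_idxOf ν hν).symm, if_pos rfl, mul_one]
        · rw [if_neg hb, if_neg, mul_zero]
          intro hc
          exact hb (idx_eq_of_symm_eq (by rw [← hc, symm_idxOf]))
      rw [Finset.sum_congr rfl (fun β _ => hdelta β), Finset.sum_ite_eq' Finset.univ]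
      rw [if_pos (Finset.mem_univ _)]
      have : a (idxOf ν hν) = MvPolynomial.coeff ν r := by rw [ha]; simp only []; rw [symm_idxOf]
      rw [this, sub_self]
  have hPr' : ∀ γ : Idx d m, u (P.vec m γ * r') = 0 := by
    intro γ
    rw [mul_comm]
    exact uOrthPoly u P hP γ r' hr'deg
  have key : (Hmat u P m).mulVec a = 0 := by
    funext γ
    have hsum : u (P.vec m γ * ∑ β : Idx d m, a β • P.vec m β) = 0 := by
      have : u (P.vec m γ * r') = u (P.vec m γ * r) - u (P.vec m γ * ∑ β : Idx d m, a β • P.vec m β) := by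
        rw [hr', mul_sub, map_sub]
      rw [hPr' γ, h m γ] at this
      linarith
    rw [Finset.mul_sum, map_sum] at hsum
    have : ∀ β : Idx d m, u (P.vec m γ * (a β • P.vec m β)) = Hmat u P m γ β * a β := by
      intro β
      rw [mul_smul_comm, _root_.map_smul, smul_eq_mul, mul_comm]
      rfl
    rw [Finset.sum_congr rfl (fun β _ => this β)] at hsum
    exact hsum
  have haz : a = 0 := by
    by_contra h'
    have hdet : (Hmat u P m).det = 0 := Matrix.exists_mulVec_eq_zero_iff.mp ⟨a, h', key⟩
    have := Hmat_unit u P hP hPmonic m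
    rw [hdet] at this
    exact (isUnit_iff_ne_zero.mp this) rfl
  obtain ⟨ν, hν, hsup⟩ := Finset.exists_mem_eq_sup r.support
    (MvPolynomial.support_nonempty.mpr hr) fun ν => ν.sum fun _ e => e
  have hνm : (ν.sum fun _ e => e) = m := by
    have : r.totalDegree = ν.sum fun _ e => e := hsup
    rw [hm, this]
  have : MvPolynomial.coeff ν r = 0 := by
    have := congrFun haz (idxOf ν hνm)
    rw [ha] at this
    simp only [] at this
    rw [symm_idxOf] at this
    exact this
  exact (MvPolynomial.mem_support_iff.mp hν) this

end Pfacts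
section Qfacts

variable {d : ℕ} (P : PolySystem d)
  (M : (n : ℕ) → Matrix (Idx d (n + 1)) (Idx d n) ℝ)
  (Nm : (n : ℕ) → Matrix (Idx d (n + 2)) (Idx d n) ℝ)
  (Qv : (n : ℕ) → Idx d n → MvPolynomial (Fin d) ℝ)

lemma matVec_totalDegree_le {a b : Type} [Fintype b] (A : Matrix a b ℝ)
    (w : b → MvPolynomial (Fin d) ℝ) (k : ℕ) (hw : ∀ j, (w j).totalDegree ≤ k) (α : a) :
    (matVec A w α).totalDegree ≤ k := by
  refine le_trans (MvPolynomial.totalDegree_finset_sum _ _) ?_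
  apply Finset.sup_le
  intro j _
  exact le_trans (MvPolynomial.totalDegree_smul_le _ _) (hw j)

lemma tdeg_sub_le (p q : MvPolynomial (Fin d) ℝ) :
    (p - q).totalDegree ≤ max p.totalDegree q.totalDegree := by
  rw [sub_eq_add_neg]
  refine le_trans (MvPolynomial.totalDegree_add _ _) ?_
  rw [MvPolynomial.totalDegree_neg]

lemma coeff_matVec_zero {a b : Type} [Fintype b] (A : Matrix a b ℝ)
    (w : b → MvPolynomial (Fin d) ℝ) (k : ℕ) (hw : ∀ j, (w j).totalDegree ≤ k)
    (α : a) (ν : Fin d →₀ ℕ) (hν : k < ν.sum fun _ e => e) :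
    MvPolynomial.coeff ν (matVec A w α) = 0 := by
  apply coeff_zero_of_deg_lt (n := ν.sum fun _ e => e) _ rfl
  right
  exact lt_of_le_of_lt (matVec_totalDegree_le _ _ k hw α) hν

variable
  (hQ0 : Qv 0 = P.vec 0)
  (hQ1 : ∀ α : Idx d 1, Qv 1 α = P.vec 1 α - matVec (M 0) (Qv 0) α)
  (hQrec : ∀ (n : ℕ) (α : Idx d (n + 2)),
      Qv (n + 2) α = P.vec (n + 2) α - matVec (M (n + 1)) (Qv (n + 1)) α -
        matVec (Nm n) (Qv n) α)

include hQ0 hQ1 hQrec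

lemma Qdeg_le : ∀ (n : ℕ) (α : Idx d n), (Qv n α).totalDegree ≤ n := by
  have key : ∀ n : ℕ, (∀ α, (Qv n α).totalDegree ≤ n) ∧ (∀ α, (Qv (n+1) α).totalDegree ≤ n+1) := by
    intro n
    induction n with
    | zero =>
      constructor
      · intro α
        rw [hQ0]
        exact le_of_eq (P.degree_eq 0 α)
      · intro α
        rw [hQ1 α]
        refine le_trans (tdeg_sub_le _ _) (max_le ?_ ?_)
        · exact le_of_eq (P.degree_eq _ α)
        · refine le_trans (matVec_totalDegree_le _ _ 0
            (fun j => by rw [hQ0]; exact le_of_eq (P.degree_eq 0 j)) α) ?_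
          omega
    | succ n ih =>
      refine ⟨ih.2, ?_⟩
      intro α
      rw [hQrec n α]
      refine le_trans (tdeg_sub_le _ _) (max_le (le_trans (tdeg_sub_le _ _) (max_le ?_ ?_)) ?_)
      · exact le_of_eq (P.degree_eq _ α)
      · exact le_trans (matVec_totalDegree_le _ _ (n+1) ih.2 α) (by omega)
      · exact le_trans (matVec_totalDegree_le _ _ n ih.1 α) (by omega)
  exact fun n => (key n).1

lemma QcoeffHigh : ∀ (n : ℕ) (α : Idx d n) (ν : Fin d →₀ ℕ), n ≤ (ν.sum fun _ e => e) →
    MvPolynomial.coeff ν (Qv n α) = MvPolynomial.coeff ν (P.vec n α) := by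
  intro n
  match n with
  | 0 => intro α ν _; rw [hQ0]
  | 1 =>
    intro α ν hν
    have hw : ∀ j : Idx d 0, (Qv 0 j).totalDegree ≤ 0 := fun j => by
      rw [hQ0]; exact le_of_eq (P.degree_eq 0 j)
    rw [hQ1 α, MvPolynomial.coeff_sub, coeff_matVec_zero (M 0) _ 0 hw α ν (by omega)]
    ring
  | (n+2) =>
    intro α ν hν
    rw [hQrec n α, MvPolynomial.coeff_sub, MvPolynomial.coeff_sub,
      coeff_matVec_zero (M (n+1)) _ (n+1)
        (fun j => Qdeg_le P M Nm Qv hQ0 hQ1 hQrec (n+1) j) α ν (by omega),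
      coeff_matVec_zero (Nm n) _ n
        (fun j => Qdeg_le P M Nm Qv hQ0 hQ1 hQrec n j) α ν (by omega)]
    ring

lemma Qmonic (hPmonic : P.IsMonic) :
    ∀ (n : ℕ) (α : Idx d n) (ν : Fin d →₀ ℕ), (ν.sum fun _ e => e) = n →
    MvPolynomial.coeff ν (Qv n α) = if ν = Finsupp.equivFunOnFinite.symm α.1 then 1 else 0 := by
  intro n α ν hν
  rw [QcoeffHigh P M Nm Qv hQ0 hQ1 hQrec n α ν (le_of_eq hν.symm)]
  exact hPmonic n α ν hν

lemma Qdeg_eq (hPmonic : P.IsMonic) (n : ℕ) (α : Idx d n) : (Qv n α).totalDegree = n := by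
  refine le_antisymm (Qdeg_le P M Nm Qv hQ0 hQ1 hQrec n α) ?_
  have hc : MvPolynomial.coeff (Finsupp.equivFunOnFinite.symm α.1) (Qv n α) = 1 := by
    rw [Qmonic P M Nm Qv hQ0 hQ1 hQrec hPmonic n α _ (idx_sum α), if_pos rfl]
  have hmem : (Finsupp.equivFunOnFinite.symm α.1 : Fin d →₀ ℕ) ∈ (Qv n α).support := by
    rw [MvPolynomial.mem_support_iff, hc]; exact one_ne_zero
  have := MvPolynomial.le_totalDegree hmem
  rwa [idx_sum α] at this

lemma Q_sub_mon (hPmonic : P.IsMonic) (n : ℕ) (α : Idx d n) :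
    Qv n α - monIdx α = 0 ∨ (Qv n α - monIdx α).totalDegree < n := by
  apply tdeg_lt_of_top_zero
  · refine le_trans (tdeg_sub_le _ _) (max_le ?_ ?_)
    · exact Qdeg_le P M Nm Qv hQ0 hQ1 hQrec n α
    · rw [totalDegree_monIdx]
  · intro ν hν
    rw [MvPolynomial.coeff_sub, Qmonic P M Nm Qv hQ0 hQ1 hQrec hPmonic n α ν hν, coeff_monIdx]
    simp

lemma Qtop_zero (hPmonic : P.IsMonic) (n : ℕ) (T : Idx d n → ℝ) (w : MvPolynomial (Fin d) ℝ)
    (hw : w = 0 ∨ w.totalDegree < n)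
    (h : (∑ β : Idx d n, T β • Qv n β) + w = 0) : ∀ β, T β = 0 := by
  intro β₀
  have hco := congrArg (MvPolynomial.coeff (Finsupp.equivFunOnFinite.symm β₀.1)) h
  rw [MvPolynomial.coeff_add, MvPolynomial.coeff_sum,
    coeff_zero_of_deg_lt hw (idx_sum β₀), MvPolynomial.coeff_zero, add_zero] at hco
  have hterm : ∀ β : Idx d n,
      MvPolynomial.coeff (Finsupp.equivFunOnFinite.symm β₀.1) (T β • Qv n β)
      = if β = β₀ then T β else 0 := by
    intro β
    rw [MvPolynomial.coeff_smul,
      Qmonic P M Nm Qv hQ0 hQ1 hQrec hPmonic n β _ (idx_sum β₀), smul_eq_mul]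
    by_cases hb : β = β₀
    · subst hb; rw [if_pos rfl, if_pos rfl, mul_one]
    · rw [if_neg hb, if_neg, mul_zero]
      intro hc
      exact hb (idx_eq_of_symm_eq hc).symm
  rw [Finset.sum_congr rfl (fun β _ => hterm β), Finset.sum_ite_eq' Finset.univ,
    if_pos (Finset.mem_univ _)] at hco
  exact hco

lemma sumQ_deg (n : ℕ) (T : Idx d n → ℝ) :
    (∑ β : Idx d n, T β • Qv n β).totalDegree ≤ n := by
  refine le_trans (MvPolynomial.totalDegree_finset_sum _ _) ?_
  apply Finset.sup_le
  intro β _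
  exact le_trans (MvPolynomial.totalDegree_smul_le _ _) (Qdeg_le P M Nm Qv hQ0 hQ1 hQrec n β)

lemma Qindep_aux (hPmonic : P.IsMonic) :
    ∀ (K : ℕ) (s : Finset (Σ n : ℕ, Idx d n)) (g : (Σ n : ℕ, Idx d n) → ℝ),
      (∀ p ∈ s, p.1 ≤ K) → (∑ p ∈ s, g p • Qv p.1 p.2 = 0) → ∀ p ∈ s, g p = 0 := by
  have sub : ∀ (K : ℕ) (s : Finset (Σ n : ℕ, Idx d n)) (g : (Σ n : ℕ, Idx d n) → ℝ),
      (∀ p ∈ s, p.1 ≤ K) → (∑ p ∈ s, g p • Qv p.1 p.2 = 0) →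
      ∀ β : Idx d K, (⟨K, β⟩ : Σ n : ℕ, Idx d n) ∈ s → g ⟨K, β⟩ = 0 := by
    intro K s g hs h β hβ
    have hco := congrArg (MvPolynomial.coeff (Finsupp.equivFunOnFinite.symm β.1)) h
    rw [MvPolynomial.coeff_sum, MvPolynomial.coeff_zero] at hco
    rw [Finset.sum_eq_single (⟨K, β⟩ : Σ n : ℕ, Idx d n)] at hco
    · rw [MvPolynomial.coeff_smul,
        Qmonic P M Nm Qv hQ0 hQ1 hQrec hPmonic K β _ (idx_sum β), if_pos rfl,
        smul_eq_mul, mul_one] at hco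
      exact hco
    · rintro ⟨k, γ⟩ hmem hne
      rcases lt_or_eq_of_le (hs _ hmem) with hk | hk
      · rw [MvPolynomial.coeff_smul, coeff_zero_of_deg_lt
          (Or.inr (lt_of_le_of_lt (Qdeg_le P M Nm Qv hQ0 hQ1 hQrec k γ) hk)) (idx_sum β),
          smul_zero]
      · subst hk
        have hgn : γ ≠ β := by
          intro hc; exact hne (by rw [hc])
        rw [MvPolynomial.coeff_smul,
          Qmonic P M Nm Qv hQ0 hQ1 hQrec hPmonic k γ _ (idx_sum β), if_neg, smul_zero]
        intro hc
        exact hgn (idx_eq_of_symm_eq hc).symm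
    · intro hc; exact absurd hβ hc
  intro K
  induction K with
  | zero =>
    intro s g hs h p hp
    obtain ⟨k, γ⟩ := p
    have hk : k = 0 := Nat.le_zero.mp (hs _ hp)
    subst hk
    exact sub 0 s g hs h γ hp
  | succ K ih =>
    intro s g hs h p hp
    have htop : ∀ q ∈ s, q.1 = K + 1 → g q = 0 := by
      rintro ⟨k, γ⟩ hq hk
      subst hk
      exact sub _ s g hs h γ hq
    have hsplit := Finset.sum_filter_add_sum_filter_not s (fun p => p.1 = K + 1)
      (fun p => g p • Qv p.1 p.2)
    have h1 : ∑ p ∈ s.filter (fun p => p.1 = K + 1), g p • Qv p.1 p.2 = 0 := by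
      apply Finset.sum_eq_zero
      intro q hq
      rw [htop q (Finset.mem_filter.mp hq).1 (Finset.mem_filter.mp hq).2, zero_smul]
    have h2 : ∑ p ∈ s.filter (fun p => ¬ p.1 = K + 1), g p • Qv p.1 p.2 = 0 := by
      have h5 := hsplit.trans h
      rw [h1, zero_add] at h5
      exact h5
    have hres := ih (s.filter (fun p => ¬ p.1 = K + 1)) g
      (fun q hq => by
        have h3 := hs q (Finset.mem_filter.mp hq).1
        have h4 := (Finset.mem_filter.mp hq).2
        omega) h2
    by_cases hptop : p.1 = K + 1
    · exact htop p hp hptop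
    · exact hres p (Finset.mem_filter.mpr ⟨hp, hptop⟩)

lemma Qindep (hPmonic : P.IsMonic) :
    LinearIndependent ℝ (fun p : (Σ n : ℕ, Idx d n) => Qv p.1 p.2) := by
  rw [linearIndependent_iff']
  intro s g h i hi
  exact Qindep_aux P M Nm Qv hQ0 hQ1 hQrec hPmonic (s.sup fun p => p.1) s g
    (fun p hp => Finset.le_sup hp) h i hi

lemma P_in_Qspan : ∀ (n : ℕ) (α : Idx d n),
    P.vec n α ∈ Submodule.span ℝ {q | ∃ m ≤ n, ∃ β : Idx d m, q = Qv m β} := by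
  have hmono : ∀ {m n : ℕ}, m ≤ n →
      Submodule.span ℝ {q | ∃ k ≤ m, ∃ β : Idx d k, q = Qv k β} ≤
      Submodule.span ℝ {q | ∃ k ≤ n, ∃ β : Idx d k, q = Qv k β} := by
    intro m n hmn
    apply Submodule.span_mono
    rintro q ⟨k, hk, β, rfl⟩
    exact ⟨k, le_trans hk hmn, β, rfl⟩
  have hQmem : ∀ (n : ℕ) (β : Idx d n),
      Qv n β ∈ Submodule.span ℝ {q | ∃ k ≤ n, ∃ γ : Idx d k, q = Qv k γ} := by
    intro n β
    exact Submodule.subset_span ⟨n, le_rfl, β, rfl⟩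
  have hMV : ∀ (n m : ℕ) (A : Matrix (Idx d n) (Idx d m) ℝ) (α : Idx d n), m ≤ n →
      matVec A (Qv m) α ∈ Submodule.span ℝ {q | ∃ k ≤ n, ∃ γ : Idx d k, q = Qv k γ} := by
    intro n m A α hmn
    apply Submodule.sum_mem
    intro β _
    exact Submodule.smul_mem _ _ (hmono hmn (hQmem m β))
  intro n
  match n with
  | 0 =>
    intro α
    rw [← hQ0]
    exact hQmem 0 α
  | 1 =>
    intro α
    have : P.vec 1 α = Qv 1 α + matVec (M 0) (Qv 0) α := by
      rw [hQ1 α]; ring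
    rw [this]
    exact Submodule.add_mem _ (hQmem 1 α) (hMV 1 0 (M 0) α (by omega))
  | (n+2) =>
    intro α
    have : P.vec (n+2) α = Qv (n+2) α + matVec (M (n+1)) (Qv (n+1)) α + matVec (Nm n) (Qv n) α := by
      rw [hQrec n α]; ring
    rw [this]
    exact Submodule.add_mem _ (Submodule.add_mem _ (hQmem (n+2) α)
      (hMV (n+2) (n+1) (M (n+1)) α (by omega))) (hMV (n+2) n (Nm n) α (by omega))

lemma Qspans : ∀ (n : ℕ) (p : MvPolynomial (Fin d) ℝ), p.totalDegree ≤ n →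
    p ∈ Submodule.span ℝ {q | ∃ m ≤ n, ∃ α : Idx d m, q = Qv m α} := by
  intro n p hp
  have h1 := P.spans n p hp
  have h2 : {q | ∃ m ≤ n, ∃ α : Idx d m, q = P.vec m α} ⊆
      (Submodule.span ℝ {q | ∃ m ≤ n, ∃ α : Idx d m, q = Qv m α} : Set _) := by
    rintro q ⟨m, hm, α, rfl⟩
    refine Submodule.span_mono ?_ (P_in_Qspan P M Nm Qv hQ0 hQ1 hQrec m α)
    rintro r ⟨k, hk, β, rfl⟩
    exact ⟨k, le_trans hk hm, β, rfl⟩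
  exact (Submodule.span_le.mpr h2) h1

/-- function-level versions of the recursion -/
lemma P_eq_Q0 : P.vec 0 = Qv 0 := hQ0.symm

lemma P_eq_Q1 : P.vec 1 = Qv 1 + matVec (M 0) (Qv 0) := by
  funext α
  have := hQ1 α
  simp only [Pi.add_apply]
  rw [this]; ring

lemma P_eq_Q2 (n : ℕ) : P.vec (n+2) = Qv (n+2) + matVec (M (n+1)) (Qv (n+1)) + matVec (Nm n) (Qv n) := by
  funext α
  have := hQrec n α
  simp only [Pi.add_apply]
  rw [this]; ring

end Qfacts
section Cores

variable {d : ℕ} (P : PolySystem d)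
  (B : (n : ℕ) → Fin d → Matrix (Idx d n) (Idx d n) ℝ)
  (C : (n : ℕ) → Fin d → Matrix (Idx d (n + 1)) (Idx d n) ℝ)
  (M : (n : ℕ) → Matrix (Idx d (n + 1)) (Idx d n) ℝ)
  (Nm : (n : ℕ) → Matrix (Idx d (n + 2)) (Idx d n) ℝ)
  (Qv : (n : ℕ) → Idx d n → MvPolynomial (Fin d) ℝ)
  (Bh : (n : ℕ) → Fin d → Matrix (Idx d n) (Idx d n) ℝ)
  (Ch : (n : ℕ) → Fin d → Matrix (Idx d (n + 1)) (Idx d n) ℝ)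
  (h3term0 : ∀ (i : Fin d) (α : Idx d 0),
      X i * P.vec 0 α = matVec (Lmat d 0 i) (P.vec 1) α + matVec (B 0 i) (P.vec 0) α)
  (h3term : ∀ (n : ℕ) (i : Fin d) (α : Idx d (n + 1)),
      X i * P.vec (n + 1) α = matVec (Lmat d (n + 1) i) (P.vec (n + 2)) α +
        matVec (B (n + 1) i) (P.vec (n + 1)) α + matVec (C n i) (P.vec n) α)
  (hQ0 : Qv 0 = P.vec 0)
  (hQ1 : ∀ α : Idx d 1, Qv 1 α = P.vec 1 α - matVec (M 0) (Qv 0) α)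
  (hQrec : ∀ (n : ℕ) (α : Idx d (n + 2)),
      Qv (n + 2) α = P.vec (n + 2) α - matVec (M (n + 1)) (Qv (n + 1)) α -
        matVec (Nm n) (Qv n) α)

include Bh Ch h3term0 h3term hQ0 hQ1 hQrec

lemma h3term0F (i : Fin d) :
    xmul i (P.vec 0) = matVec (Lmat d 0 i) (P.vec 1) + matVec (B 0 i) (P.vec 0) := by
  funext α
  exact h3term0 i α

lemma h3termF (n : ℕ) (i : Fin d) :
    xmul i (P.vec (n+1)) = matVec (Lmat d (n+1) i) (P.vec (n+2)) +
      matVec (B (n+1) i) (P.vec (n+1)) + matVec (C n i) (P.vec n) := by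
  funext α
  exact h3term n i α

lemma QrecF (n : ℕ) :
    Qv (n+2) = P.vec (n+2) - matVec (M (n+1)) (Qv (n+1)) - matVec (Nm n) (Qv n) := by
  funext α
  exact hQrec n α

lemma Q1F : Qv 1 = P.vec 1 - matVec (M 0) (Qv 0) := by
  funext α
  exact hQ1 α

lemma core0 (i : Fin d) :
    xmul i (Qv 0) = matVec (Lmat d 0 i) (Qv 1)
      + matVec (B 0 i + Lmat d 0 i * M 0) (Qv 0) := by
  rw [hQ0, h3term0F P B C M Nm Qv Bh Ch h3term0 h3term hQ0 hQ1 hQrec i,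
    P_eq_Q1 P M Nm Qv hQ0 hQ1 hQrec, ← hQ0]
  simp only [matVec_add, matVec_sub, add_matVec, sub_matVec, matVec_matVec]
  abel

lemma core1 (i : Fin d)
    (h0 : xmul i (Qv 0) = matVec (Lmat d 0 i) (Qv 1) + matVec (Bh 0 i) (Qv 0)) :
    xmul i (Qv 1) = matVec (Lmat d 1 i) (Qv 2)
      + matVec (B 1 i - M 0 * Lmat d 0 i + Lmat d 1 i * M 1) (Qv 1)
      + matVec (C 0 i - M 0 * Bh 0 i + B 1 i * M 0 + Lmat d 1 i * Nm 0) (Qv 0) := by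
  rw [Q1F P B C M Nm Qv Bh Ch h3term0 h3term hQ0 hQ1 hQrec, xmul_sub, xmul_matVec, h0,
    h3termF P B C M Nm Qv Bh Ch h3term0 h3term hQ0 hQ1 hQrec 0 i,
    P_eq_Q2 P M Nm Qv hQ0 hQ1 hQrec 0, P_eq_Q1 P M Nm Qv hQ0 hQ1 hQrec, P_eq_Q0 P M Nm Qv hQ0 hQ1 hQrec]
  simp only [matVec_add, matVec_sub, add_matVec, sub_matVec, matVec_matVec]
  abel

lemma core2 (i : Fin d)
    (h1 : xmul i (Qv 1) = matVec (Lmat d 1 i) (Qv 2) + matVec (Bh 1 i) (Qv 1)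
      + matVec (Ch 0 i) (Qv 0))
    (h0 : xmul i (Qv 0) = matVec (Lmat d 0 i) (Qv 1) + matVec (Bh 0 i) (Qv 0)) :
    xmul i (Qv 2) = matVec (Lmat d 2 i) (Qv 3)
      + matVec (B 2 i - M 1 * Lmat d 1 i + Lmat d 2 i * M 2) (Qv 2)
      + matVec (C 1 i - M 1 * Bh 1 i + B 2 i * M 1 - Nm 0 * Lmat d 0 i + Lmat d 2 i * Nm 1) (Qv 1)
      + matVec ((C 1 i * M 0 + B 2 i * Nm 0) - (M 1 * Ch 0 i + Nm 0 * Bh 0 i)) (Qv 0) := by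
  rw [QrecF P B C M Nm Qv Bh Ch h3term0 h3term hQ0 hQ1 hQrec 0, xmul_sub, xmul_sub, xmul_matVec, xmul_matVec, h1, h0,
    h3termF P B C M Nm Qv Bh Ch h3term0 h3term hQ0 hQ1 hQrec 1 i,
    P_eq_Q2 P M Nm Qv hQ0 hQ1 hQrec 1, P_eq_Q2 P M Nm Qv hQ0 hQ1 hQrec 0,
    P_eq_Q1 P M Nm Qv hQ0 hQ1 hQrec]
  simp only [matVec_add, matVec_sub, add_matVec, sub_matVec, matVec_matVec]
  abel

lemma coreG (n : ℕ) (i : Fin d)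
    (h2 : xmul i (Qv (n+2)) = matVec (Lmat d (n+2) i) (Qv (n+3)) + matVec (Bh (n+2) i) (Qv (n+2))
      + matVec (Ch (n+1) i) (Qv (n+1)))
    (h1 : xmul i (Qv (n+1)) = matVec (Lmat d (n+1) i) (Qv (n+2)) + matVec (Bh (n+1) i) (Qv (n+1))
      + matVec (Ch n i) (Qv n)) :
    xmul i (Qv (n+3)) = matVec (Lmat d (n+3) i) (Qv (n+4))
      + matVec (B (n+3) i - M (n+2) * Lmat d (n+2) i + Lmat d (n+3) i * M (n+3)) (Qv (n+3))
      + matVec (C (n+2) i - M (n+2) * Bh (n+2) i + B (n+3) i * M (n+2)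
          - Nm (n+1) * Lmat d (n+1) i + Lmat d (n+3) i * Nm (n+2)) (Qv (n+2))
      + matVec ((C (n+2) i * M (n+1) + B (n+3) i * Nm (n+1))
          - (M (n+2) * Ch (n+1) i + Nm (n+1) * Bh (n+1) i)) (Qv (n+1))
      + matVec (C (n+2) i * Nm n - Nm (n+1) * Ch n i) (Qv n) := by
  rw [QrecF P B C M Nm Qv Bh Ch h3term0 h3term hQ0 hQ1 hQrec (n+1), xmul_sub, xmul_sub, xmul_matVec, xmul_matVec, h2, h1,
    h3termF P B C M Nm Qv Bh Ch h3term0 h3term hQ0 hQ1 hQrec (n+2) i,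
    P_eq_Q2 P M Nm Qv hQ0 hQ1 hQrec (n+2), P_eq_Q2 P M Nm Qv hQ0 hQ1 hQrec (n+1),
    P_eq_Q2 P M Nm Qv hQ0 hQ1 hQrec n]
  simp only [matVec_add, matVec_sub, add_matVec, sub_matVec, matVec_matVec]
  abel

end Cores
section PartA

variable {d : ℕ} (P : PolySystem d)
  (B : (n : ℕ) → Fin d → Matrix (Idx d n) (Idx d n) ℝ)
  (C : (n : ℕ) → Fin d → Matrix (Idx d (n + 1)) (Idx d n) ℝ)
  (M : (n : ℕ) → Matrix (Idx d (n + 1)) (Idx d n) ℝ)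
  (Nm : (n : ℕ) → Matrix (Idx d (n + 2)) (Idx d n) ℝ)
  (Qv : (n : ℕ) → Idx d n → MvPolynomial (Fin d) ℝ)
  (Bh : (n : ℕ) → Fin d → Matrix (Idx d n) (Idx d n) ℝ)
  (Ch : (n : ℕ) → Fin d → Matrix (Idx d (n + 1)) (Idx d n) ℝ)

lemma neg_matVec {a b : Type} [Fintype b] (A : Matrix a b ℝ) (w : b → MvPolynomial (Fin d) ℝ) :
    matVec (-A) w = - matVec A w := by
  funext α
  simp [matVec, neg_smul, Finset.sum_neg_distrib]

variable
  (hPmonic : P.IsMonic)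
  (h3term0 : ∀ (i : Fin d) (α : Idx d 0),
      X i * P.vec 0 α = matVec (Lmat d 0 i) (P.vec 1) α + matVec (B 0 i) (P.vec 0) α)
  (h3term : ∀ (n : ℕ) (i : Fin d) (α : Idx d (n + 1)),
      X i * P.vec (n + 1) α = matVec (Lmat d (n + 1) i) (P.vec (n + 2)) α +
        matVec (B (n + 1) i) (P.vec (n + 1)) α + matVec (C n i) (P.vec n) α)
  (hQ0 : Qv 0 = P.vec 0)
  (hQ1 : ∀ α : Idx d 1, Qv 1 α = P.vec 1 α - matVec (M 0) (Qv 0) α)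
  (hQrec : ∀ (n : ℕ) (α : Idx d (n + 2)),
      Qv (n + 2) α = P.vec (n + 2) α - matVec (M (n + 1)) (Qv (n + 1)) α -
        matVec (Nm n) (Qv n) α)

include hPmonic hQ0 hQ1 hQrec

lemma matVec_rows_zero {ι : Type} (n : ℕ) (A : Matrix ι (Idx d n) ℝ)
    (h : matVec A (Qv n) = 0) : A = 0 := by
  ext α β
  have hα := congrFun h α
  have := Qtop_zero P M Nm Qv hQ0 hQ1 hQrec hPmonic n (fun β => A α β) 0 (Or.inl rfl)
    (by rw [add_zero]; exact hα) β
  simpa using this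

lemma peel {ι : Type} {k : ℕ} (A : Matrix ι (Idx d k) ℝ) (W : ι → MvPolynomial (Fin d) ℝ)
    (hW : ∀ α, (W α).totalDegree < k) (h : matVec A (Qv k) + W = 0) :
    A = 0 ∧ W = 0 := by
  have hA : A = 0 := by
    ext α β
    have hα := congrFun h α
    have := Qtop_zero P M Nm Qv hQ0 hQ1 hQrec hPmonic k (fun β => A α β) (W α)
      (Or.inr (hW α)) hα β
    simpa using this
  refine ⟨hA, ?_⟩
  rw [hA, zero_matVec, zero_add] at h
  exact h

lemma deg_matVec_lt {ι : Type} (k m : ℕ) (hmk : m < k) (A : Matrix ι (Idx d m) ℝ) (α : ι) :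
    ((matVec A (Qv m)) α).totalDegree < k :=
  lt_of_le_of_lt (matVec_totalDegree_le _ _ m (Qdeg_le P M Nm Qv hQ0 hQ1 hQrec m) α) hmk

lemma deg_matVec_add_lt {ι : Type} (k m₁ m₂ : ℕ) (h1 : m₁ < k) (h2 : m₂ < k)
    (A₁ : Matrix ι (Idx d m₁) ℝ) (A₂ : Matrix ι (Idx d m₂) ℝ) (α : ι) :
    ((matVec A₁ (Qv m₁) + matVec A₂ (Qv m₂)) α).totalDegree < k := by
  refine lt_of_le_of_lt (le_trans (le_of_eq (congrArg _ (Pi.add_apply _ _ _)))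
    (MvPolynomial.totalDegree_add _ _)) ?_
  exact max_lt (deg_matVec_lt P M Nm Qv hPmonic hQ0 hQ1 hQrec k m₁ h1 A₁ α)
    (deg_matVec_lt P M Nm Qv hPmonic hQ0 hQ1 hQrec k m₂ h2 A₂ α)

lemma deg_matVec_add3_lt {ι : Type} (k m₁ m₂ m₃ : ℕ) (h1 : m₁ < k) (h2 : m₂ < k) (h3 : m₃ < k)
    (A₁ : Matrix ι (Idx d m₁) ℝ) (A₂ : Matrix ι (Idx d m₂) ℝ) (A₃ : Matrix ι (Idx d m₃) ℝ)
    (α : ι) :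
    ((matVec A₁ (Qv m₁) + matVec A₂ (Qv m₂) + matVec A₃ (Qv m₃)) α).totalDegree < k := by
  refine lt_of_le_of_lt (le_trans (le_of_eq (congrArg _ (Pi.add_apply _ _ _)))
    (MvPolynomial.totalDegree_add _ _)) ?_
  exact max_lt (deg_matVec_add_lt P M Nm Qv hPmonic hQ0 hQ1 hQrec k m₁ m₂ h1 h2 A₁ A₂ α)
    (deg_matVec_lt P M Nm Qv hPmonic hQ0 hQ1 hQrec k m₃ h3 A₃ α)


include h3term0 h3term Bh Ch

lemma extract0 (i : Fin d)
    (hT0 : xmul i (Qv 0) = matVec (Lmat d 0 i) (Qv 1) + matVec (Bh 0 i) (Qv 0)) :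
    Bh 0 i = B 0 i + Lmat d 0 i * M 0 := by
  have hc := core0 P B C M Nm Qv Bh Ch h3term0 h3term hQ0 hQ1 hQrec i
  have hd : matVec (Bh 0 i - (B 0 i + Lmat d 0 i * M 0)) (Qv 0) = 0 := by
    calc matVec (Bh 0 i - (B 0 i + Lmat d 0 i * M 0)) (Qv 0)
        = (matVec (Lmat d 0 i) (Qv 1) + matVec (Bh 0 i) (Qv 0)) -
          (matVec (Lmat d 0 i) (Qv 1) + matVec (B 0 i + Lmat d 0 i * M 0) (Qv 0)) := by
          simp only [sub_matVec]; abel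
      _ = 0 := by rw [← hT0, ← hc, sub_self]
  exact sub_eq_zero.mp (matVec_rows_zero P M Nm Qv hPmonic hQ0 hQ1 hQrec 0 _ hd)

lemma extract1 (i : Fin d)
    (hT0 : xmul i (Qv 0) = matVec (Lmat d 0 i) (Qv 1) + matVec (Bh 0 i) (Qv 0))
    (hT1 : xmul i (Qv 1) = matVec (Lmat d 1 i) (Qv 2) + matVec (Bh 1 i) (Qv 1)
      + matVec (Ch 0 i) (Qv 0)) :
    Bh 1 i = B 1 i - M 0 * Lmat d 0 i + Lmat d 1 i * M 1 ∧
    Ch 0 i = C 0 i - M 0 * Bh 0 i + B 1 i * M 0 + Lmat d 1 i * Nm 0 := by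
  have hc := core1 P B C M Nm Qv Bh Ch h3term0 h3term hQ0 hQ1 hQrec i hT0
  have hd : matVec (Bh 1 i - (B 1 i - M 0 * Lmat d 0 i + Lmat d 1 i * M 1)) (Qv 1)
      + matVec (Ch 0 i - (C 0 i - M 0 * Bh 0 i + B 1 i * M 0 + Lmat d 1 i * Nm 0)) (Qv 0) = 0 := by
    calc _ = (matVec (Lmat d 1 i) (Qv 2) + matVec (Bh 1 i) (Qv 1) + matVec (Ch 0 i) (Qv 0)) -
          (matVec (Lmat d 1 i) (Qv 2)
            + matVec (B 1 i - M 0 * Lmat d 0 i + Lmat d 1 i * M 1) (Qv 1)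
            + matVec (C 0 i - M 0 * Bh 0 i + B 1 i * M 0 + Lmat d 1 i * Nm 0) (Qv 0)) := by
          simp only [sub_matVec]; abel
      _ = 0 := by rw [← hT1, ← hc, sub_self]
  obtain ⟨e1, hrest⟩ := peel P M Nm Qv hPmonic hQ0 hQ1 hQrec _ _
    (fun α => deg_matVec_lt P M Nm Qv hPmonic hQ0 hQ1 hQrec 1 0 (by omega) _ α) hd
  exact ⟨sub_eq_zero.mp e1,
    sub_eq_zero.mp (matVec_rows_zero P M Nm Qv hPmonic hQ0 hQ1 hQrec 0 _ hrest)⟩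

lemma extract2 (i : Fin d)
    (hT0 : xmul i (Qv 0) = matVec (Lmat d 0 i) (Qv 1) + matVec (Bh 0 i) (Qv 0))
    (hT1 : xmul i (Qv 1) = matVec (Lmat d 1 i) (Qv 2) + matVec (Bh 1 i) (Qv 1)
      + matVec (Ch 0 i) (Qv 0))
    (hT2 : xmul i (Qv 2) = matVec (Lmat d 2 i) (Qv 3) + matVec (Bh 2 i) (Qv 2)
      + matVec (Ch 1 i) (Qv 1)) :
    Bh 2 i = B 2 i - M 1 * Lmat d 1 i + Lmat d 2 i * M 2 ∧
    Ch 1 i = C 1 i - M 1 * Bh 1 i + B 2 i * M 1 - Nm 0 * Lmat d 0 i + Lmat d 2 i * Nm 1 ∧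
    M 1 * Ch 0 i + Nm 0 * Bh 0 i = C 1 i * M 0 + B 2 i * Nm 0 := by
  have hc := core2 P B C M Nm Qv Bh Ch h3term0 h3term hQ0 hQ1 hQrec i hT1 hT0
  have hd : matVec (Bh 2 i - (B 2 i - M 1 * Lmat d 1 i + Lmat d 2 i * M 2)) (Qv 2)
      + (matVec (Ch 1 i - (C 1 i - M 1 * Bh 1 i + B 2 i * M 1 - Nm 0 * Lmat d 0 i
          + Lmat d 2 i * Nm 1)) (Qv 1)
        + matVec ((M 1 * Ch 0 i + Nm 0 * Bh 0 i) - (C 1 i * M 0 + B 2 i * Nm 0)) (Qv 0)) = 0 := by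
    calc _ = (matVec (Lmat d 2 i) (Qv 3) + matVec (Bh 2 i) (Qv 2) + matVec (Ch 1 i) (Qv 1)) -
          (matVec (Lmat d 2 i) (Qv 3)
            + matVec (B 2 i - M 1 * Lmat d 1 i + Lmat d 2 i * M 2) (Qv 2)
            + matVec (C 1 i - M 1 * Bh 1 i + B 2 i * M 1 - Nm 0 * Lmat d 0 i
                + Lmat d 2 i * Nm 1) (Qv 1)
            + matVec ((C 1 i * M 0 + B 2 i * Nm 0) - (M 1 * Ch 0 i + Nm 0 * Bh 0 i)) (Qv 0)) := by
          simp only [sub_matVec]; abel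
      _ = 0 := by rw [← hT2, ← hc, sub_self]
  obtain ⟨e2, hrest⟩ := peel P M Nm Qv hPmonic hQ0 hQ1 hQrec _ _
    (fun α => deg_matVec_add_lt P M Nm Qv hPmonic hQ0 hQ1 hQrec 2 1 0 (by omega) (by omega) _ _ α) hd
  obtain ⟨e1, hrest0⟩ := peel P M Nm Qv hPmonic hQ0 hQ1 hQrec _ _
    (fun α => deg_matVec_lt P M Nm Qv hPmonic hQ0 hQ1 hQrec 1 0 (by omega) _ α) hrest
  exact ⟨sub_eq_zero.mp e2, sub_eq_zero.mp e1,
    sub_eq_zero.mp (matVec_rows_zero P M Nm Qv hPmonic hQ0 hQ1 hQrec 0 _ hrest0)⟩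

lemma extractG (n : ℕ) (i : Fin d)
    (hT1 : xmul i (Qv (n+1)) = matVec (Lmat d (n+1) i) (Qv (n+2)) + matVec (Bh (n+1) i) (Qv (n+1))
      + matVec (Ch n i) (Qv n))
    (hT2 : xmul i (Qv (n+2)) = matVec (Lmat d (n+2) i) (Qv (n+3)) + matVec (Bh (n+2) i) (Qv (n+2))
      + matVec (Ch (n+1) i) (Qv (n+1)))
    (hT3 : xmul i (Qv (n+3)) = matVec (Lmat d (n+3) i) (Qv (n+4)) + matVec (Bh (n+3) i) (Qv (n+3))
      + matVec (Ch (n+2) i) (Qv (n+2))) :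
    Bh (n+3) i = B (n+3) i - M (n+2) * Lmat d (n+2) i + Lmat d (n+3) i * M (n+3) ∧
    Ch (n+2) i = C (n+2) i - M (n+2) * Bh (n+2) i + B (n+3) i * M (n+2)
        - Nm (n+1) * Lmat d (n+1) i + Lmat d (n+3) i * Nm (n+2) ∧
    M (n+2) * Ch (n+1) i + Nm (n+1) * Bh (n+1) i = C (n+2) i * M (n+1) + B (n+3) i * Nm (n+1) ∧
    C (n+2) i * Nm n = Nm (n+1) * Ch n i := by
  have hc := coreG P B C M Nm Qv Bh Ch h3term0 h3term hQ0 hQ1 hQrec n i hT2 hT1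
  have hd : matVec (Bh (n+3) i - (B (n+3) i - M (n+2) * Lmat d (n+2) i
        + Lmat d (n+3) i * M (n+3))) (Qv (n+3))
      + (matVec (Ch (n+2) i - (C (n+2) i - M (n+2) * Bh (n+2) i + B (n+3) i * M (n+2)
          - Nm (n+1) * Lmat d (n+1) i + Lmat d (n+3) i * Nm (n+2))) (Qv (n+2))
        + (matVec ((M (n+2) * Ch (n+1) i + Nm (n+1) * Bh (n+1) i)
            - (C (n+2) i * M (n+1) + B (n+3) i * Nm (n+1))) (Qv (n+1))
          + matVec (Nm (n+1) * Ch n i - C (n+2) i * Nm n) (Qv n))) = 0 := by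
    calc _ = (matVec (Lmat d (n+3) i) (Qv (n+4)) + matVec (Bh (n+3) i) (Qv (n+3))
            + matVec (Ch (n+2) i) (Qv (n+2))) -
          (matVec (Lmat d (n+3) i) (Qv (n+4))
            + matVec (B (n+3) i - M (n+2) * Lmat d (n+2) i + Lmat d (n+3) i * M (n+3)) (Qv (n+3))
            + matVec (C (n+2) i - M (n+2) * Bh (n+2) i + B (n+3) i * M (n+2)
                - Nm (n+1) * Lmat d (n+1) i + Lmat d (n+3) i * Nm (n+2)) (Qv (n+2))
            + matVec ((C (n+2) i * M (n+1) + B (n+3) i * Nm (n+1))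
                - (M (n+2) * Ch (n+1) i + Nm (n+1) * Bh (n+1) i)) (Qv (n+1))
            + matVec (C (n+2) i * Nm n - Nm (n+1) * Ch n i) (Qv n)) := by
          simp only [sub_matVec]; abel
      _ = 0 := by rw [← hT3, ← hc, sub_self]
  obtain ⟨e3, hrest2⟩ := peel P M Nm Qv hPmonic hQ0 hQ1 hQrec _ _
    (fun α => by
      simp only [Pi.add_apply]
      refine lt_of_le_of_lt (le_trans (MvPolynomial.totalDegree_add _ _)
        (max_le ?_ (le_trans (MvPolynomial.totalDegree_add _ _) (max_le ?_ ?_))))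
        (show n+2 < n+3 by omega)
      · exact le_trans (matVec_totalDegree_le _ _ _
          (Qdeg_le P M Nm Qv hQ0 hQ1 hQrec _) α) (by omega)
      · exact le_trans (matVec_totalDegree_le _ _ _
          (Qdeg_le P M Nm Qv hQ0 hQ1 hQrec _) α) (by omega)
      · exact le_trans (matVec_totalDegree_le _ _ _
          (Qdeg_le P M Nm Qv hQ0 hQ1 hQrec _) α) (by omega)) hd
  obtain ⟨e2, hrest1⟩ := peel P M Nm Qv hPmonic hQ0 hQ1 hQrec _ _
    (fun α => deg_matVec_add_lt P M Nm Qv hPmonic hQ0 hQ1 hQrec (n+2) (n+1) n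
      (by omega) (by omega) _ _ α) hrest2
  obtain ⟨e1, hrest0⟩ := peel P M Nm Qv hPmonic hQ0 hQ1 hQrec _ _
    (fun α => deg_matVec_lt P M Nm Qv hPmonic hQ0 hQ1 hQrec (n+1) n (by omega) _ α) hrest1
  refine ⟨sub_eq_zero.mp e3, sub_eq_zero.mp e2, sub_eq_zero.mp e1, ?_⟩
  exact (sub_eq_zero.mp (matVec_rows_zero P M Nm Qv hPmonic hQ0 hQ1 hQrec n _ hrest0)).symm

lemma backwardA
    (r1b : ∀ i, Bh 0 i = B 0 i + Lmat d 0 i * M 0)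
    (r1 : ∀ (n : ℕ) (i : Fin d),
      Bh (n + 1) i = B (n + 1) i - M n * Lmat d n i + Lmat d (n + 1) i * M (n + 1))
    (r2b : ∀ i, Ch 0 i = C 0 i - M 0 * Bh 0 i + B 1 i * M 0 + Lmat d 1 i * Nm 0)
    (r2 : ∀ (n : ℕ) (i : Fin d),
      Ch (n + 1) i = C (n + 1) i - M (n + 1) * Bh (n + 1) i + B (n + 2) i * M (n + 1) -
        Nm n * Lmat d n i + Lmat d (n + 2) i * Nm (n + 1))
    (r3a : ∀ (n : ℕ) (i : Fin d),
      M (n + 1) * Ch n i + Nm n * Bh n i = C (n + 1) i * M n + B (n + 2) i * Nm n)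
    (r3b : ∀ (n : ℕ) (i : Fin d), C (n + 2) i * Nm n = Nm (n + 1) * Ch n i) :
    (∀ i, xmul i (Qv 0) = matVec (Lmat d 0 i) (Qv 1) + matVec (Bh 0 i) (Qv 0)) ∧
    (∀ (n : ℕ) (i : Fin d), xmul i (Qv (n+1)) = matVec (Lmat d (n+1) i) (Qv (n+2))
      + matVec (Bh (n+1) i) (Qv (n+1)) + matVec (Ch n i) (Qv n)) := by
  have t0 : ∀ i, xmul i (Qv 0) = matVec (Lmat d 0 i) (Qv 1) + matVec (Bh 0 i) (Qv 0) := by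
    intro i
    rw [r1b i]
    exact core0 P B C M Nm Qv Bh Ch h3term0 h3term hQ0 hQ1 hQrec i
  have t1 : ∀ i, xmul i (Qv 1) = matVec (Lmat d 1 i) (Qv 2)
      + matVec (Bh 1 i) (Qv 1) + matVec (Ch 0 i) (Qv 0) := by
    intro i
    rw [r1 0 i, r2b i]
    exact core1 P B C M Nm Qv Bh Ch h3term0 h3term hQ0 hQ1 hQrec i (t0 i)
  have t2 : ∀ i, xmul i (Qv 2) = matVec (Lmat d 2 i) (Qv 3)
      + matVec (Bh 2 i) (Qv 2) + matVec (Ch 1 i) (Qv 1) := by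
    intro i
    have hc := core2 P B C M Nm Qv Bh Ch h3term0 h3term hQ0 hQ1 hQrec i (t1 i) (t0 i)
    rw [hc, r1 1 i, r2 0 i, ← r3a 0 i, sub_self, zero_matVec, add_zero]
  have tAll : ∀ (n : ℕ), (∀ i, xmul i (Qv (n+1)) = matVec (Lmat d (n+1) i) (Qv (n+2))
      + matVec (Bh (n+1) i) (Qv (n+1)) + matVec (Ch n i) (Qv n)) ∧
      (∀ i, xmul i (Qv (n+2)) = matVec (Lmat d (n+2) i) (Qv (n+3))
      + matVec (Bh (n+2) i) (Qv (n+2)) + matVec (Ch (n+1) i) (Qv (n+1))) := by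
    intro n
    induction n with
    | zero => exact ⟨t1, t2⟩
    | succ n ih =>
      refine ⟨ih.2, ?_⟩
      intro i
      have hc := coreG P B C M Nm Qv Bh Ch h3term0 h3term hQ0 hQ1 hQrec n i (ih.2 i) (ih.1 i)
      rw [hc, r1 (n+2) i, r2 (n+1) i, ← r3a (n+1) i, sub_self, zero_matVec, add_zero,
        r3b n i, sub_self, zero_matVec, add_zero]
  exact ⟨t0, fun n i => (tAll n).1 i⟩

end PartA
section PartB

variable {d : ℕ} (u : MvPolynomial (Fin d) ℝ →ₗ[ℝ] ℝ) (P : PolySystem d)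
  (M : (n : ℕ) → Matrix (Idx d (n + 1)) (Idx d n) ℝ)
  (Nm : (n : ℕ) → Matrix (Idx d (n + 2)) (Idx d n) ℝ)

/-- the polynomial λ -/
noncomputable def lamE : MvPolynomial (Fin d) ℝ :=
  (∑ α : Idx d 2, ∑ β : Idx d 2,
      (Nm 0 α zeroIdx * (Hmat u P 2)⁻¹ α β) • P.vec 2 β) +
  (∑ α : Idx d 1, ∑ β : Idx d 1,
      (M 0 α zeroIdx * (Hmat u P 1)⁻¹ α β) • P.vec 1 β) +
  ((Hmat u P 0)⁻¹ zeroIdx zeroIdx) • P.vec 0 zeroIdx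

noncomputable def aco : Idx d 2 → ℝ :=
  Matrix.vecMul (fun α => Nm 0 α zeroIdx) (Hmat u P 2)⁻¹

noncomputable def bco : Idx d 1 → ℝ :=
  Matrix.vecMul (fun α => M 0 α zeroIdx) (Hmat u P 1)⁻¹

noncomputable def cco : Idx d 0 → ℝ := fun _ => (Hmat u P 0)⁻¹ zeroIdx zeroIdx

lemma lamE_eq : lamE u P M Nm = (∑ β : Idx d 2, aco u P Nm β • P.vec 2 β) +
    (∑ β : Idx d 1, bco u P M β • P.vec 1 β) +
    (∑ β : Idx d 0, cco u P β • P.vec 0 β) := by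
  unfold lamE aco bco cco
  congr 1
  · congr 1
    · rw [Finset.sum_comm]
      apply Finset.sum_congr rfl
      intro β _
      rw [← Finset.sum_smul]
      rfl
    · rw [Finset.sum_comm]
      apply Finset.sum_congr rfl
      intro β _
      rw [← Finset.sum_smul]
      rfl
  · rw [Fintype.sum_unique]
    rfl

/-- the functional v = λ u -/
noncomputable def vlam : MvPolynomial (Fin d) ℝ →ₗ[ℝ] ℝ :=
  u.comp (LinearMap.mulLeft ℝ (lamE u P M Nm))

lemma vlam_apply (p : MvPolynomial (Fin d) ℝ) : vlam u P M Nm p = u (lamE u P M Nm * p) := rfl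

lemma uSP_ne (hP : IsOPS u P) {m k : ℕ} (h : m ≠ k) (f : Idx d m → ℝ) (γ : Idx d k) :
    u ((∑ β : Idx d m, f β • P.vec m β) * P.vec k γ) = 0 := by
  rw [Finset.sum_mul, map_sum]
  apply Finset.sum_eq_zero
  intro β _
  rw [smul_mul_assoc, _root_.map_smul, Porth u P hP h β γ, smul_zero]

lemma uSP_eq {k : ℕ} (f : Idx d k → ℝ) (γ : Idx d k) :
    u ((∑ β : Idx d k, f β • P.vec k β) * P.vec k γ) = Matrix.vecMul f (Hmat u P k) γ := by
  rw [Finset.sum_mul, map_sum]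
  rw [Matrix.vecMul, dotProduct]
  apply Finset.sum_congr rfl
  intro β _
  rw [smul_mul_assoc, _root_.map_smul, smul_eq_mul]
  rfl

lemma vecMul_aco (hP : IsOPS u P) (hPmonic : P.IsMonic) :
    Matrix.vecMul (aco u P Nm) (Hmat u P 2) = fun α => Nm 0 α zeroIdx := by
  rw [aco, Matrix.vecMul_vecMul, Matrix.nonsing_inv_mul _ (Hmat_unit u P hP hPmonic 2),
    Matrix.vecMul_one]

lemma vecMul_bco (hP : IsOPS u P) (hPmonic : P.IsMonic) :
    Matrix.vecMul (bco u P M) (Hmat u P 1) = fun α => M 0 α zeroIdx := by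
  rw [bco, Matrix.vecMul_vecMul, Matrix.nonsing_inv_mul _ (Hmat_unit u P hP hPmonic 1),
    Matrix.vecMul_one]

lemma vecMul_cco (hP : IsOPS u P) (hPmonic : P.IsMonic) :
    Matrix.vecMul (cco u P) (Hmat u P 0) = fun _ => 1 := by
  funext γ
  have hγ : γ = zeroIdx := idx0_eq γ
  subst hγ
  have h1 : Matrix.vecMul (cco u P) (Hmat u P 0) zeroIdx
      = ((Hmat u P 0)⁻¹ * Hmat u P 0) zeroIdx zeroIdx := by
    rw [Matrix.vecMul, dotProduct, Matrix.mul_apply]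
    apply Finset.sum_congr rfl
    intro β _
    have : β = zeroIdx := idx0_eq β
    subst this
    rfl
  rw [h1, Matrix.nonsing_inv_mul _ (Hmat_unit u P hP hPmonic 0), Matrix.one_apply_eq]

lemma vP_val0 (hP : IsOPS u P) (hPmonic : P.IsMonic) :
    vlam u P M Nm (P.vec 0 zeroIdx) = 1 := by
  rw [vlam_apply, lamE_eq, add_mul, add_mul, map_add, map_add,
    uSP_ne u P hP (show (2:ℕ) ≠ 0 by omega) (aco u P Nm) zeroIdx,
    uSP_ne u P hP (show (1:ℕ) ≠ 0 by omega) (bco u P M) zeroIdx,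
    uSP_eq u P (cco u P) zeroIdx]
  rw [show Matrix.vecMul (cco u P) (Hmat u P 0) zeroIdx = 1 from
    congrFun (vecMul_cco u P hP hPmonic) zeroIdx]
  ring

lemma vP_val1 (hP : IsOPS u P) (hPmonic : P.IsMonic) (γ : Idx d 1) :
    vlam u P M Nm (P.vec 1 γ) = M 0 γ zeroIdx := by
  rw [vlam_apply, lamE_eq, add_mul, add_mul, map_add, map_add,
    uSP_ne u P hP (show (2:ℕ) ≠ 1 by omega) (aco u P Nm) γ,
    uSP_ne u P hP (show (0:ℕ) ≠ 1 by omega) (cco u P) γ,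
    uSP_eq u P (bco u P M) γ]
  rw [show Matrix.vecMul (bco u P M) (Hmat u P 1) γ = M 0 γ zeroIdx from
    congrFun (vecMul_bco u P M hP hPmonic) γ]
  ring

lemma vP_val2 (hP : IsOPS u P) (hPmonic : P.IsMonic) (γ : Idx d 2) :
    vlam u P M Nm (P.vec 2 γ) = Nm 0 γ zeroIdx := by
  rw [vlam_apply, lamE_eq, add_mul, add_mul, map_add, map_add,
    uSP_ne u P hP (show (1:ℕ) ≠ 2 by omega) (bco u P M) γ,
    uSP_ne u P hP (show (0:ℕ) ≠ 2 by omega) (cco u P) γ,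
    uSP_eq u P (aco u P Nm) γ]
  rw [show Matrix.vecMul (aco u P Nm) (Hmat u P 2) γ = Nm 0 γ zeroIdx from
    congrFun (vecMul_aco u P Nm hP hPmonic) γ]
  ring

lemma vP_val3 (hP : IsOPS u P) (k : ℕ) (γ : Idx d (k + 3)) :
    vlam u P M Nm (P.vec (k + 3) γ) = 0 := by
  rw [vlam_apply, lamE_eq, add_mul, add_mul, map_add, map_add,
    uSP_ne u P hP (show (2:ℕ) ≠ k+3 by omega) (aco u P Nm) γ,
    uSP_ne u P hP (show (1:ℕ) ≠ k+3 by omega) (bco u P M) γ,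
    uSP_ne u P hP (show (0:ℕ) ≠ k+3 by omega) (cco u P) γ]
  ring

/-- applying a functional to matVec entries -/
lemma LM_matVec (T : MvPolynomial (Fin d) ℝ →ₗ[ℝ] ℝ) {a b : Type} [Fintype b]
    (A : Matrix a b ℝ) (w : b → MvPolynomial (Fin d) ℝ) (β : a) :
    T (matVec A w β) = ∑ δ, A β δ * T (w δ) := by
  simp [matVec, map_sum, _root_.map_smul, smul_eq_mul]

lemma LM_mul_matVec (T : MvPolynomial (Fin d) ℝ →ₗ[ℝ] ℝ) (p : MvPolynomial (Fin d) ℝ)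
    {a b : Type} [Fintype b] (A : Matrix a b ℝ) (w : b → MvPolynomial (Fin d) ℝ) (β : a) :
    T (p * matVec A w β) = ∑ δ, A β δ * T (p * w δ) := by
  simp [matVec, Finset.mul_sum, mul_smul_comm, map_sum, _root_.map_smul, smul_eq_mul]

lemma LM_matVec_mul (T : MvPolynomial (Fin d) ℝ →ₗ[ℝ] ℝ) (p : MvPolynomial (Fin d) ℝ)
    {a b : Type} [Fintype b] (A : Matrix a b ℝ) (w : b → MvPolynomial (Fin d) ℝ) (β : a) :
    T (matVec A w β * p) = ∑ δ, A β δ * T (w δ * p) := by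
  simp [matVec, Finset.sum_mul, smul_mul_assoc, map_sum, _root_.map_smul, smul_eq_mul]

end PartB
section PartB2

variable {d : ℕ} (u : MvPolynomial (Fin d) ℝ →ₗ[ℝ] ℝ) (P : PolySystem d)
  (M : (n : ℕ) → Matrix (Idx d (n + 1)) (Idx d n) ℝ)
  (Nm : (n : ℕ) → Matrix (Idx d (n + 2)) (Idx d n) ℝ)
  (Qv : (n : ℕ) → Idx d n → MvPolynomial (Fin d) ℝ)
  (hP : IsOPS u P) (hPmonic : P.IsMonic)
  (hQ0 : Qv 0 = P.vec 0)
  (hQ1 : ∀ α : Idx d 1, Qv 1 α = P.vec 1 α - matVec (M 0) (Qv 0) α)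
  (hQrec : ∀ (n : ℕ) (α : Idx d (n + 2)),
      Qv (n + 2) α = P.vec (n + 2) α - matVec (M (n + 1)) (Qv (n + 1)) α -
        matVec (Nm n) (Qv n) α)

include hP hPmonic hQ0 hQ1 hQrec

lemma vQ_val0 (γ : Idx d 0) : vlam u P M Nm (Qv 0 γ) = 1 := by
  have hγ : γ = zeroIdx := idx0_eq γ
  subst hγ
  rw [hQ0]
  exact vP_val0 u P M Nm hP hPmonic

lemma vQ_zero : ∀ (k : ℕ) (β : Idx d (k + 1)), vlam u P M Nm (Qv (k + 1) β) = 0 := by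
  have v1 : ∀ β : Idx d 1, vlam u P M Nm (Qv 1 β) = 0 := by
    intro β
    rw [hQ1 β, map_sub, vP_val1 u P M Nm hP hPmonic, LM_matVec]
    have hterm : ∀ δ : Idx d 0, M 0 β δ * vlam u P M Nm (Qv 0 δ) = M 0 β δ := by
      intro δ
      rw [vQ_val0 u P M Nm Qv hP hPmonic hQ0 hQ1 hQrec δ, mul_one]
    rw [Finset.sum_congr rfl (fun δ _ => hterm δ), Fintype.sum_unique]
    have : (default : Idx d 0) = zeroIdx := rfl
    rw [this, sub_self]
  have v2 : ∀ β : Idx d 2, vlam u P M Nm (Qv 2 β) = 0 := by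
    intro β
    rw [hQrec 0 β, map_sub, map_sub, vP_val2 u P M Nm hP hPmonic, LM_matVec, LM_matVec]
    have h1 : ∑ δ : Idx d 1, M 1 β δ * vlam u P M Nm (Qv 1 δ) = 0 :=
      Finset.sum_eq_zero fun δ _ => by rw [v1 δ, mul_zero]
    have hterm : ∀ δ : Idx d 0, Nm 0 β δ * vlam u P M Nm (Qv 0 δ) = Nm 0 β δ := by
      intro δ
      rw [vQ_val0 u P M Nm Qv hP hPmonic hQ0 hQ1 hQrec δ, mul_one]
    rw [h1, Finset.sum_congr rfl (fun δ _ => hterm δ), Fintype.sum_unique]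
    have : (default : Idx d 0) = zeroIdx := rfl
    rw [this]
    ring
  have key : ∀ k : ℕ, (∀ β : Idx d (k + 1), vlam u P M Nm (Qv (k + 1) β) = 0) ∧
      (∀ β : Idx d (k + 2), vlam u P M Nm (Qv (k + 2) β) = 0) := by
    intro k
    induction k with
    | zero => exact ⟨v1, v2⟩
    | succ k ih =>
      refine ⟨ih.2, ?_⟩
      intro β
      rw [hQrec (k + 1) β, map_sub, map_sub, vP_val3 u P M Nm hP k, LM_matVec, LM_matVec]
      rw [Finset.sum_eq_zero fun δ _ => by rw [ih.2 δ, mul_zero],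
        Finset.sum_eq_zero fun δ _ => by rw [ih.1 δ, mul_zero]]
      ring
  exact fun k => (key k).1

variable (Bh : (n : ℕ) → Fin d → Matrix (Idx d n) (Idx d n) ℝ)
  (Ch : (n : ℕ) → Fin d → Matrix (Idx d (n + 1)) (Idx d n) ℝ)

lemma vorth
    (htS : ∀ (n : ℕ) (i : Fin d) (α : Idx d (n + 1)),
      X i * Qv (n + 1) α = matVec (Lmat d (n + 1) i) (Qv (n + 2)) α +
        matVec (Bh (n + 1) i) (Qv (n + 1)) α + matVec (Ch n i) (Qv n) α) :
    ∀ (m : ℕ) (ν : Fin d →₀ ℕ), (ν.sum fun _ e => e) = m → ∀ (n : ℕ), m < n →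
      ∀ β : Idx d n, vlam u P M Nm (MvPolynomial.monomial ν 1 * Qv n β) = 0 := by
  intro m
  induction m with
  | zero =>
    intro ν hν n hn β
    have hν0 : ν = 0 := finsupp_deg_zero ν hν
    subst hν0
    rw [show (MvPolynomial.monomial (0 : Fin d →₀ ℕ)) (1 : ℝ) = 1 by
      simp [MvPolynomial.monomial_zero'], one_mul]
    match n, hn with
    | (k + 1), _ => exact vQ_zero u P M Nm Qv hP hPmonic hQ0 hQ1 hQrec k β
  | succ m ih =>
    intro ν hν n hn β
    have hne : ν ≠ 0 := by
      intro h0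
      rw [h0] at hν
      simp at hν
    obtain ⟨i, hi⟩ := Finsupp.support_nonempty_iff.mpr hne
    have hile : Finsupp.single i 1 ≤ ν := by
      rw [Finsupp.single_le_iff]
      exact Nat.one_le_iff_ne_zero.mpr (Finsupp.mem_support_iff.mp hi)
    have hadd : Finsupp.single i 1 + (ν - Finsupp.single i 1) = ν := add_tsub_cancel_of_le hile
    have hsum' : ((ν - Finsupp.single i 1).sum fun _ e => e) = m := by
      have h2 := congrArg (fun μ : Fin d →₀ ℕ => μ.sum fun _ e => e) hadd
      rw [Finsupp.sum_add_index' (fun _ => rfl) (fun _ _ _ => rfl),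
        Finsupp.sum_single_index rfl] at h2
      omega
    have hmon : (MvPolynomial.monomial ν (1 : ℝ))
        = X i * MvPolynomial.monomial (ν - Finsupp.single i 1) 1 := by
      rw [MvPolynomial.X, MvPolynomial.monomial_mul, one_mul, hadd]
    match n, hn with
    | (k + 1), hn =>
      have hrw : MvPolynomial.monomial ν (1 : ℝ) * Qv (k + 1) β
          = MvPolynomial.monomial (ν - Finsupp.single i 1) 1 * (X i * Qv (k + 1) β) := by
        rw [hmon]; ring
      rw [hrw, htS k i β, mul_add, mul_add, map_add, map_add,
        LM_mul_matVec, LM_mul_matVec, LM_mul_matVec]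
      have hk : m < k := by omega
      rw [Finset.sum_eq_zero fun δ _ => by
          rw [ih _ hsum' (k + 2) (by omega) δ, mul_zero],
        Finset.sum_eq_zero fun δ _ => by
          rw [ih _ hsum' (k + 1) (by omega) δ, mul_zero],
        Finset.sum_eq_zero fun δ _ => by
          rw [ih _ hsum' k (by omega) δ, mul_zero]]
      ring

lemma vclause1
    (htS : ∀ (n : ℕ) (i : Fin d) (α : Idx d (n + 1)),
      X i * Qv (n + 1) α = matVec (Lmat d (n + 1) i) (Qv (n + 2)) α +
        matVec (Bh (n + 1) i) (Qv (n + 1)) α + matVec (Ch n i) (Qv n) α) :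
    ∀ (m n : ℕ), m < n → ∀ (α : Idx d m) (β : Idx d n),
      vlam u P M Nm (monIdx α * Qv n β) = 0 := by
  intro m n h α β
  exact vorth u P M Nm Qv hP hPmonic hQ0 hQ1 hQrec Bh Ch htS m
    (Finsupp.equivFunOnFinite.symm α.1) (idx_sum α) n h β

lemma vOrthPoly
    (htS : ∀ (n : ℕ) (i : Fin d) (α : Idx d (n + 1)),
      X i * Qv (n + 1) α = matVec (Lmat d (n + 1) i) (Qv (n + 2)) α +
        matVec (Bh (n + 1) i) (Qv (n + 1)) α + matVec (Ch n i) (Qv n) α)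
    {n : ℕ} (β : Idx d n) (p : MvPolynomial (Fin d) ℝ)
    (h : p = 0 ∨ p.totalDegree < n) : vlam u P M Nm (p * Qv n β) = 0 := by
  rcases h with h | h
  · simp [h]
  · conv_lhs => rw [p.as_sum]
    rw [Finset.sum_mul, map_sum]
    apply Finset.sum_eq_zero
    intro ν hν
    have hsmul : (MvPolynomial.monomial ν) (MvPolynomial.coeff ν p)
        = MvPolynomial.coeff ν p • MvPolynomial.monomial ν 1 := by
      simp [MvPolynomial.smul_monomial]
    rw [hsmul, smul_mul_assoc, _root_.map_smul, smul_eq_mul]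
    have hlt : (ν.sum fun _ e => e) < n :=
      lt_of_le_of_lt (MvPolynomial.le_totalDegree hν) h
    rw [← monIdx_idxOf ν rfl,
      vclause1 u P M Nm Qv hP hPmonic hQ0 hQ1 hQrec Bh Ch htS _ n hlt _ β, mul_zero]

end PartB2
section PartB3

variable {d : ℕ} (u : MvPolynomial (Fin d) ℝ →ₗ[ℝ] ℝ) (P : PolySystem d)
  (M : (n : ℕ) → Matrix (Idx d (n + 1)) (Idx d n) ℝ)
  (Nm : (n : ℕ) → Matrix (Idx d (n + 2)) (Idx d n) ℝ)
  (Qv : (n : ℕ) → Idx d n → MvPolynomial (Fin d) ℝ)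
  (hP : IsOPS u P) (hPmonic : P.IsMonic)
  (hQ0 : Qv 0 = P.vec 0)
  (hQ1 : ∀ α : Idx d 1, Qv 1 α = P.vec 1 α - matVec (M 0) (Qv 0) α)
  (hQrec : ∀ (n : ℕ) (α : Idx d (n + 2)),
      Qv (n + 2) α = P.vec (n + 2) α - matVec (M (n + 1)) (Qv (n + 1)) α -
        matVec (Nm n) (Qv n) α)
  (Bh : (n : ℕ) → Fin d → Matrix (Idx d n) (Idx d n) ℝ)
  (Ch : (n : ℕ) → Fin d → Matrix (Idx d (n + 1)) (Idx d n) ℝ)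

include hP hPmonic

/-- coefficient extraction from a `P`-combination -/
lemma coeff_sumP {n : ℕ} (f : Idx d n → ℝ) (β₀ : Idx d n) :
    MvPolynomial.coeff (Finsupp.equivFunOnFinite.symm β₀.1)
      (∑ β : Idx d n, f β • P.vec n β) = f β₀ := by
  rw [MvPolynomial.coeff_sum]
  have hterm : ∀ β : Idx d n,
      MvPolynomial.coeff (Finsupp.equivFunOnFinite.symm β₀.1) (f β • P.vec n β)
      = if β = β₀ then f β else 0 := by
    intro β
    rw [MvPolynomial.coeff_smul, hPmonic n β _ (idx_sum β₀), smul_eq_mul]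
    by_cases hb : β = β₀
    · subst hb; rw [if_pos rfl, if_pos rfl, mul_one]
    · rw [if_neg hb, if_neg, mul_zero]
      intro hc
      exact hb (idx_eq_of_symm_eq hc).symm
  rw [Finset.sum_congr rfl (fun β _ => hterm β), Finset.sum_ite_eq' Finset.univ,
    if_pos (Finset.mem_univ _)]

lemma sumP_deg {n : ℕ} (f : Idx d n → ℝ) :
    (∑ β : Idx d n, f β • P.vec n β).totalDegree ≤ n := by
  refine le_trans (MvPolynomial.totalDegree_finset_sum _ _) ?_
  apply Finset.sup_le
  intro β _
  exact le_trans (MvPolynomial.totalDegree_smul_le _ _) (le_of_eq (P.degree_eq n β))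

lemma lam_coeff (β₀ : Idx d 2) :
    MvPolynomial.coeff (Finsupp.equivFunOnFinite.symm β₀.1) (lamE u P M Nm)
      = aco u P Nm β₀ := by
  rw [lamE_eq, MvPolynomial.coeff_add, MvPolynomial.coeff_add,
    coeff_sumP u P hP hPmonic (aco u P Nm) β₀,
    coeff_zero_of_deg_lt (n := 2)
      (Or.inr (lt_of_le_of_lt (sumP_deg u P hP hPmonic (bco u P M)) (by omega))) (idx_sum β₀),
    coeff_zero_of_deg_lt (n := 2)
      (Or.inr (lt_of_le_of_lt (sumP_deg u P hP hPmonic (cco u P)) (by omega))) (idx_sum β₀)]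
  ring

lemma aco_ne (hN2 : Nm 0 ≠ 0) : aco u P Nm ≠ 0 := by
  intro h0
  apply hN2
  have hc : (fun α : Idx d 2 => Nm 0 α zeroIdx) = 0 := by
    rw [← vecMul_aco u P Nm hP hPmonic, h0, Matrix.zero_vecMul]
  ext α β
  have hβ : β = zeroIdx := idx0_eq β
  subst hβ
  exact congrFun hc α

lemma lam_ne (hN2 : Nm 0 ≠ 0) : lamE u P M Nm ≠ 0 := by
  obtain ⟨β₀, hβ₀⟩ := Function.ne_iff.mp (aco_ne u P Nm hP hPmonic hN2)
  intro h0
  apply hβ₀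
  have := lam_coeff u P M Nm hP hPmonic β₀
  rw [h0, MvPolynomial.coeff_zero] at this
  exact this.symm

lemma lam_deg_le : (lamE u P M Nm).totalDegree ≤ 2 := by
  rw [lamE_eq]
  refine le_trans (MvPolynomial.totalDegree_add _ _) (max_le
    (le_trans (MvPolynomial.totalDegree_add _ _)
      (max_le (sumP_deg u P hP hPmonic (aco u P Nm))
        (le_trans (sumP_deg u P hP hPmonic (bco u P M)) (by omega))))
    (le_trans (sumP_deg u P hP hPmonic (cco u P)) (by omega)))

lemma lam_deg (hN2 : Nm 0 ≠ 0) : (lamE u P M Nm).totalDegree = 2 := by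
  refine le_antisymm (lam_deg_le u P M Nm hP hPmonic) ?_
  obtain ⟨β₀, hβ₀⟩ := Function.ne_iff.mp (aco_ne u P Nm hP hPmonic hN2)
  have hmem : (Finsupp.equivFunOnFinite.symm β₀.1 : Fin d →₀ ℕ) ∈ (lamE u P M Nm).support := by
    rw [MvPolynomial.mem_support_iff, lam_coeff u P M Nm hP hPmonic β₀]
    exact hβ₀
  have := MvPolynomial.le_totalDegree hmem
  rwa [idx_sum β₀] at this

noncomputable def Ht (n : ℕ) : Matrix (Idx d n) (Idx d n) ℝ :=
  Matrix.of fun α β => vlam u P M Nm (Qv n α * Qv n β)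

include hQ0 hQ1 hQrec

lemma Gt_eq
    (htS : ∀ (n : ℕ) (i : Fin d) (α : Idx d (n + 1)),
      X i * Qv (n + 1) α = matVec (Lmat d (n + 1) i) (Qv (n + 2)) α +
        matVec (Bh (n + 1) i) (Qv (n + 1)) α + matVec (Ch n i) (Qv n) α)
    (n : ℕ) :
    (Matrix.of fun α β : Idx d n => vlam u P M Nm (monIdx α * Qv n β))
      = Ht u P M Nm Qv n := by
  ext α β
  have h0 : vlam u P M Nm ((Qv n α - monIdx α) * Qv n β) = 0 :=
    vOrthPoly u P M Nm Qv hP hPmonic hQ0 hQ1 hQrec Bh Ch htS β _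
      (Q_sub_mon P M Nm Qv hQ0 hQ1 hQrec hPmonic n α)
  rw [sub_mul, map_sub, sub_eq_zero] at h0
  exact h0.symm

lemma Ht_unit (hN2 : Nm 0 ≠ 0)
    (htS : ∀ (n : ℕ) (i : Fin d) (α : Idx d (n + 1)),
      X i * Qv (n + 1) α = matVec (Lmat d (n + 1) i) (Qv (n + 2)) α +
        matVec (Bh (n + 1) i) (Qv (n + 1)) α + matVec (Ch n i) (Qv n) α)
    (n : ℕ) : IsUnit (Ht u P M Nm Qv n).det := by
  rw [isUnit_iff_ne_zero]
  intro hdet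
  obtain ⟨c, hc0, hceq⟩ := Matrix.exists_mulVec_eq_zero_iff.mpr hdet
  set q : MvPolynomial (Fin d) ℝ := ∑ β : Idx d n, c β • Qv n β with hq
  have hexp : ∀ {k : ℕ} (γ : Idx d k), vlam u P M Nm (Qv k γ * q)
      = ∑ β : Idx d n, c β * vlam u P M Nm (Qv k γ * Qv n β) := by
    intro k γ
    rw [hq, Finset.mul_sum, map_sum]
    apply Finset.sum_congr rfl
    intro β _
    rw [mul_smul_comm, _root_.map_smul, smul_eq_mul]
  have hQq : ∀ (k : ℕ) (γ : Idx d k), vlam u P M Nm (Qv k γ * q) = 0 := by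
    intro k γ
    rcases Nat.lt_trichotomy k n with hk | hk | hk
    · rw [hexp]
      apply Finset.sum_eq_zero
      intro β _
      rw [vOrthPoly u P M Nm Qv hP hPmonic hQ0 hQ1 hQrec Bh Ch htS β _
        (Or.inr (lt_of_le_of_lt (Qdeg_le P M Nm Qv hQ0 hQ1 hQrec k γ) hk)), mul_zero]
    · subst hk
      rw [hexp]
      have hγ := congrFun hceq γ
      rw [Matrix.mulVec, dotProduct, Pi.zero_apply] at hγ
      rw [← hγ]
      apply Finset.sum_congr rfl
      intro β _
      rw [mul_comm]
      rfl
    · rw [hexp]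
      apply Finset.sum_eq_zero
      intro β _
      rw [mul_comm (Qv k γ)]
      rw [vOrthPoly u P M Nm Qv hP hPmonic hQ0 hQ1 hQrec Bh Ch htS γ _
        (Or.inr (lt_of_le_of_lt (Qdeg_le P M Nm Qv hQ0 hQ1 hQrec n β) hk)), mul_zero]
  have hPq : ∀ (m : ℕ) (γ : Idx d m), vlam u P M Nm (P.vec m γ * q) = 0 := by
    intro m
    match m with
    | 0 =>
      intro γ
      rw [show P.vec 0 γ = Qv 0 γ from (congrFun hQ0 γ).symm]
      exact hQq 0 γ
    | 1 =>
      intro γ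
      rw [congrFun (P_eq_Q1 P M Nm Qv hQ0 hQ1 hQrec) γ, Pi.add_apply, add_mul, map_add,
        hQq 1 γ, LM_matVec_mul]
      rw [Finset.sum_eq_zero fun δ _ => by rw [hQq 0 δ, mul_zero]]
      ring
    | (m + 2) =>
      intro γ
      rw [congrFun (P_eq_Q2 P M Nm Qv hQ0 hQ1 hQrec m) γ, Pi.add_apply, Pi.add_apply,
        add_mul, add_mul, map_add, map_add, hQq (m + 2) γ, LM_matVec_mul, LM_matVec_mul]
      rw [Finset.sum_eq_zero fun δ _ => by rw [hQq (m + 1) δ, mul_zero],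
        Finset.sum_eq_zero fun δ _ => by rw [hQq m δ, mul_zero]]
      ring
  have hur : ∀ (m : ℕ) (γ : Idx d m), u (P.vec m γ * (lamE u P M Nm * q)) = 0 := by
    intro m γ
    rw [mul_left_comm]
    exact hPq m γ
  have hlamq : lamE u P M Nm * q = 0 := uNondeg u P hP hPmonic _ hur
  have hqz : q = 0 := by
    rcases mul_eq_zero.mp hlamq with h | h
    · exact absurd h (lam_ne u P M Nm hP hPmonic hN2)
    · exact h
  apply hc0
  funext β
  exact Qtop_zero P M Nm Qv hQ0 hQ1 hQrec hPmonic n c 0 (Or.inl rfl)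
    (by rw [add_zero]; exact hqz) β

end PartB3
/-- Theorem 4.2.  Let `{ℙ_n}` be the monic OPS of a quasi-definite `u`,
with three term relations `x_iℙ_n = L_{n,i}ℙ_{n+1} + B_{n,i}ℙ_n + C_{n,i}ℙ_{n-1}`.
Given matrices `M_n` (`n ≥ 1`), `N_n` (`n ≥ 2`) with `N_2 ≠ 0`, define recursively
`ℚ_0 = ℙ_0`, `ℚ_1 = ℙ_1 - M_1ℙ_0`, `ℚ_n = ℙ_n - M_nℚ_{n-1} - N_nℚ_{n-2}`.
Then `{ℚ_n}` satisfies three term relations with coefficients `B̂_{n,i}`, `Ĉ_{n,i}`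
iff the compatibility equations (RR1)–(RR3b) hold; in that case `{ℚ_n}` is the monic OPS
of a quasi-definite moment functional `v = λ(x)u`, where
`λ(x) = N_2^tH_2⁻¹ℙ_2 + M_1^tH_1⁻¹ℙ_1 + H_0⁻¹ℙ_0` has exact total degree 2.
(Indexing: `B n i = B_{n,i}`, `C n i = C_{n+1,i}`, `M n = M_{n+1}`, `Nm n = N_{n+2}`,
`Bh n i = B̂_{n,i}`, `Ch n i = Ĉ_{n+1,i}`.) -/
theorem christoffel_favard
    {d : ℕ} (hd : 1 ≤ d)
    (u : MvPolynomial (Fin d) ℝ →ₗ[ℝ] ℝ)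
    (P : PolySystem d) (hP : IsOPS u P) (hPmonic : P.IsMonic)
    (B : (n : ℕ) → Fin d → Matrix (Idx d n) (Idx d n) ℝ)
    (C : (n : ℕ) → Fin d → Matrix (Idx d (n + 1)) (Idx d n) ℝ)
    (h3term0 : ∀ (i : Fin d) (α : Idx d 0),
      X i * P.vec 0 α = matVec (Lmat d 0 i) (P.vec 1) α + matVec (B 0 i) (P.vec 0) α)
    (h3term : ∀ (n : ℕ) (i : Fin d) (α : Idx d (n + 1)),
      X i * P.vec (n + 1) α = matVec (Lmat d (n + 1) i) (P.vec (n + 2)) α +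
        matVec (B (n + 1) i) (P.vec (n + 1)) α + matVec (C n i) (P.vec n) α)
    (M : (n : ℕ) → Matrix (Idx d (n + 1)) (Idx d n) ℝ)
    (Nm : (n : ℕ) → Matrix (Idx d (n + 2)) (Idx d n) ℝ) (hN2 : Nm 0 ≠ 0)
    (Qv : (n : ℕ) → Idx d n → MvPolynomial (Fin d) ℝ)
    (hQ0 : Qv 0 = P.vec 0)
    (hQ1 : ∀ α : Idx d 1, Qv 1 α = P.vec 1 α - matVec (M 0) (Qv 0) α)
    (hQrec : ∀ (n : ℕ) (α : Idx d (n + 2)),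
      Qv (n + 2) α = P.vec (n + 2) α - matVec (M (n + 1)) (Qv (n + 1)) α -
        matVec (Nm n) (Qv n) α)
    (Bh : (n : ℕ) → Fin d → Matrix (Idx d n) (Idx d n) ℝ)
    (Ch : (n : ℕ) → Fin d → Matrix (Idx d (n + 1)) (Idx d n) ℝ) :
    -- the three term relation for `{ℚ_n}` …
    (((∀ (i : Fin d) (α : Idx d 0),
        X i * Qv 0 α = matVec (Lmat d 0 i) (Qv 1) α + matVec (Bh 0 i) (Qv 0) α) ∧
      (∀ (n : ℕ) (i : Fin d) (α : Idx d (n + 1)),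
        X i * Qv (n + 1) α = matVec (Lmat d (n + 1) i) (Qv (n + 2)) α +
          matVec (Bh (n + 1) i) (Qv (n + 1)) α + matVec (Ch n i) (Qv n) α)) ↔
    -- … holds iff (RR1)–(RR3b) hold:
      ((∀ i : Fin d, Bh 0 i = B 0 i + Lmat d 0 i * M 0) ∧
       (∀ (n : ℕ) (i : Fin d),
         Bh (n + 1) i = B (n + 1) i - M n * Lmat d n i + Lmat d (n + 1) i * M (n + 1)) ∧
       (∀ i : Fin d,
         Ch 0 i = C 0 i - M 0 * Bh 0 i + B 1 i * M 0 + Lmat d 1 i * Nm 0) ∧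
       (∀ (n : ℕ) (i : Fin d),
         Ch (n + 1) i = C (n + 1) i - M (n + 1) * Bh (n + 1) i + B (n + 2) i * M (n + 1) -
           Nm n * Lmat d n i + Lmat d (n + 2) i * Nm (n + 1)) ∧
       (∀ (n : ℕ) (i : Fin d),
         M (n + 1) * Ch n i + Nm n * Bh n i = C (n + 1) i * M n + B (n + 2) i * Nm n) ∧
       (∀ (n : ℕ) (i : Fin d),
         C (n + 2) i * Nm n = Nm (n + 1) * Ch n i))) ∧
    -- in such a case, `{ℚ_n}` is a monic OPS for `v = λ(x)u` with `deg λ = 2`: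
    (((∀ (i : Fin d) (α : Idx d 0),
        X i * Qv 0 α = matVec (Lmat d 0 i) (Qv 1) α + matVec (Bh 0 i) (Qv 0) α) ∧
      (∀ (n : ℕ) (i : Fin d) (α : Idx d (n + 1)),
        X i * Qv (n + 1) α = matVec (Lmat d (n + 1) i) (Qv (n + 2)) α +
          matVec (Bh (n + 1) i) (Qv (n + 1)) α + matVec (Ch n i) (Qv n) α)) →
      ∃ (QS : PolySystem d) (v : MvPolynomial (Fin d) ℝ →ₗ[ℝ] ℝ),
        QS.vec = Qv ∧ QS.IsMonic ∧ IsOPS v QS ∧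
        (((∑ α : Idx d 2, ∑ β : Idx d 2,
              (Nm 0 α zeroIdx * (Hmat u P 2)⁻¹ α β) • P.vec 2 β) +
          (∑ α : Idx d 1, ∑ β : Idx d 1,
              (M 0 α zeroIdx * (Hmat u P 1)⁻¹ α β) • P.vec 1 β) +
          ((Hmat u P 0)⁻¹ zeroIdx zeroIdx) • P.vec 0 zeroIdx).totalDegree = 2) ∧
        (∀ p : MvPolynomial (Fin d) ℝ,
          v p = u ((((∑ α : Idx d 2, ∑ β : Idx d 2,
              (Nm 0 α zeroIdx * (Hmat u P 2)⁻¹ α β) • P.vec 2 β) +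
            (∑ α : Idx d 1, ∑ β : Idx d 1,
              (M 0 α zeroIdx * (Hmat u P 1)⁻¹ α β) • P.vec 1 β) +
            ((Hmat u P 0)⁻¹ zeroIdx zeroIdx) • P.vec 0 zeroIdx)) * p))) := by
  constructor
  · constructor
    · rintro ⟨hT0p, hTSp⟩
      have hT0 : ∀ i : Fin d, xmul i (Qv 0)
          = matVec (Lmat d 0 i) (Qv 1) + matVec (Bh 0 i) (Qv 0) :=
        fun i => funext fun α => hT0p i α
      have hTS : ∀ (n : ℕ) (i : Fin d), xmul i (Qv (n+1))
          = matVec (Lmat d (n+1) i) (Qv (n+2)) + matVec (Bh (n+1) i) (Qv (n+1))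
            + matVec (Ch n i) (Qv n) :=
        fun n i => funext fun α => hTSp n i α
      refine ⟨fun i => extract0 P B C M Nm Qv Bh Ch hPmonic h3term0 h3term hQ0 hQ1 hQrec
          i (hT0 i), ?_,
        fun i => (extract1 P B C M Nm Qv Bh Ch hPmonic h3term0 h3term hQ0 hQ1 hQrec
          i (hT0 i) (hTS 0 i)).2, ?_, ?_,
        fun n i => (extractG P B C M Nm Qv Bh Ch hPmonic h3term0 h3term hQ0 hQ1 hQrec
          n i (hTS n i) (hTS (n+1) i) (hTS (n+2) i)).2.2.2⟩
      · intro n i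
        match n with
        | 0 => exact (extract1 P B C M Nm Qv Bh Ch hPmonic h3term0 h3term hQ0 hQ1 hQrec
            i (hT0 i) (hTS 0 i)).1
        | 1 => exact (extract2 P B C M Nm Qv Bh Ch hPmonic h3term0 h3term hQ0 hQ1 hQrec
            i (hT0 i) (hTS 0 i) (hTS 1 i)).1
        | (n+2) => exact (extractG P B C M Nm Qv Bh Ch hPmonic h3term0 h3term hQ0 hQ1 hQrec
            n i (hTS n i) (hTS (n+1) i) (hTS (n+2) i)).1
      · intro n i
        match n with
        | 0 => exact (extract2 P B C M Nm Qv Bh Ch hPmonic h3term0 h3term hQ0 hQ1 hQrec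
            i (hT0 i) (hTS 0 i) (hTS 1 i)).2.1
        | (n+1) => exact (extractG P B C M Nm Qv Bh Ch hPmonic h3term0 h3term hQ0 hQ1 hQrec
            n i (hTS n i) (hTS (n+1) i) (hTS (n+2) i)).2.1
      · intro n i
        match n with
        | 0 => exact (extract2 P B C M Nm Qv Bh Ch hPmonic h3term0 h3term hQ0 hQ1 hQrec
            i (hT0 i) (hTS 0 i) (hTS 1 i)).2.2
        | (n+1) => exact (extractG P B C M Nm Qv Bh Ch hPmonic h3term0 h3term hQ0 hQ1 hQrec
            n i (hTS n i) (hTS (n+1) i) (hTS (n+2) i)).2.2.1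
    · rintro ⟨r1b, r1, r2b, r2, r3a, r3b⟩
      obtain ⟨t0, tS⟩ := backwardA P B C M Nm Qv Bh Ch hPmonic h3term0 h3term hQ0 hQ1 hQrec
        r1b r1 r2b r2 r3a r3b
      exact ⟨fun i α => congrFun (t0 i) α, fun n i α => congrFun (tS n i) α⟩
  · rintro ⟨hT0p, hTSp⟩
    refine ⟨⟨Qv, Qdeg_eq P M Nm Qv hQ0 hQ1 hQrec hPmonic,
        Qindep P M Nm Qv hQ0 hQ1 hQrec hPmonic,
        Qspans P M Nm Qv hQ0 hQ1 hQrec⟩,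
      vlam u P M Nm, rfl, ?_, ⟨?_, ?_⟩, ?_, fun p => rfl⟩
    · exact Qmonic P M Nm Qv hQ0 hQ1 hQrec hPmonic
    · exact vclause1 u P M Nm Qv hP hPmonic hQ0 hQ1 hQrec Bh Ch hTSp
    · intro n
      rw [show (Matrix.of fun α β : Idx d n => vlam u P M Nm (monIdx α * Qv n β))
          = Ht u P M Nm Qv n from
        Gt_eq u P M Nm Qv hP hPmonic hQ0 hQ1 hQrec Bh Ch hTSp n]
      exact Ht_unit u P M Nm Qv hP hPmonic hQ0 hQ1 hQrec Bh Ch hN2 hTSp n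
    · exact lam_deg u P M Nm hP hPmonic hN2
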